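/- arXiv:1511.06048 — 4 statements merged into one kernel-verified Lean document; each statement's English description precedes it below -/
import Mathlib

section
/- Let L be a first-order language all of whose symbols are function symbols, with no nullary and no unary function symbols and only finitely many function symbols in total. Let 𝔄 be an L-structure with underlying set A. Then the preorder with approximations (ᵂA, ≤) consisting of all infinite sequences in A with the reduction relation, equipped with its natural topology, is a Ramsey space (i.e., every subset with the property of Baire is Ramsey) if and only if 𝔄 is a Ramsey algebra. -/
open Function Set

universe u v w

/-- Terms of a purely functional first-order language whose function symbols
of arity `n` form the type `F n`, with variables indexed by `ℕ`. -/
inductive Tm (F : ℕ → Type u) : Type u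
  | var : ℕ → Tm F
  | func : {n : ℕ} → F n → (Fin n → Tm F) → Tm F

namespace Tm

variable {F : ℕ → Type u} {A : Type v} {β : Type w}

/-- The list of (indices of) variables occurring in a term, from left to right. -/
def varList : Tm F → List ℕ
  | .var i => [i]
  | .func (n := n) _ ts => (List.finRange n).flatMap fun i => (ts i).varList

/-- A term is *orderly* if the indices of the variables occurring in it,
read from left to right, are strictly increasing. -/
def Orderly (t : Tm F) : Prop := t.varList.Chain' (· < ·)

/-- `TermLT s t` iff the index of the last variable of `s` is less than the
index of the first variable of `t`. -/
def TermLT (s t : Tm F) : Prop :=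
  ∃ i j, s.varList.getLast? = some i ∧ t.varList.head? = some j ∧ i < j

/-- An infinite sequence of orderly terms is *admissible* iff it is increasing
with respect to `TermLT`. -/
def Admissible (ts : ℕ → Tm F) : Prop :=
  (∀ i, (ts i).Orderly) ∧ ∀ i, TermLT (ts i) (ts (i + 1))

/-- `s.subst σ` replaces each variable `vᵢ` in `s` by `σ i`. -/
def subst (σ : ℕ → Tm F) : Tm F → Tm F
  | .var i => σ i
  | .func f ts => .func f fun i => (ts i).subst σ

/-- Interpretation of a term in a structure with underlying set `A` whose
interpretation of the function symbols is `I`, under the assignment `a`. -/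
def realize (I : ∀ n, F n → (Fin n → A) → A) (a : ℕ → A) : Tm F → A
  | .var i => a i
  | .func (n := n) f ts => I n f fun i => (ts i).realize I a

end Tm

section General

variable {F : ℕ → Type u} {A : Type v} {β : Type w}

/-- `b` is a reduction of `a` (with respect to the algebra `(A, I)`). -/
def SeqReduction (I : ∀ n, F n → (Fin n → A) → A) (b a : ℕ → A) : Prop :=
  ∃ ts : ℕ → Tm F, Tm.Admissible ts ∧ ∀ i, b i = (ts i).realize I a

/-- The set of finite reductions of `a`. -/
def FR (I : ∀ n, F n → (Fin n → A) → A) (a : ℕ → A) : Set A :=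
  { x | ∃ t : Tm F, t.Orderly ∧ x = t.realize I a }

/-- `(A, I)` is a Ramsey algebra. -/
def RamseyAlg (I : ∀ n, F n → (Fin n → A) → A) : Prop :=
  ∀ (a : ℕ → A) (X : Set A),
    ∃ b, SeqReduction I b a ∧ (FR I b ⊆ X ∨ FR I b ∩ X = ∅)

/-- `(A, I)` is Ramsey below `a`. -/
def RamseyBelow (I : ∀ n, F n → (Fin n → A) → A) (a : ℕ → A) : Prop :=
  ∀ b, SeqReduction I b a → ∀ X : Set A,
    ∃ c, SeqReduction I c b ∧ (FR I c ⊆ X ∨ FR I c ∩ X = ∅)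

/-- An increasing tuple `t₁ < t₂ < ⋯ < tₙ` of orderly terms. -/
def OrdTuple {n : ℕ} (t : Fin n → Tm F) : Prop :=
  (∀ i, (t i).Orderly) ∧ ∀ i j : Fin n, i < j → Tm.TermLT (t i) (t j)

/-- `𝒜` (as a function on orderly terms) is an orderly algebra. -/
def IsOrderlyAlg (𝒜 : Tm F → β) : Prop :=
  ∀ (n : ℕ) (f : F n) (t t' : Fin n → Tm F), OrdTuple t → OrdTuple t' →
    (∀ k, 𝒜 (t k) = 𝒜 (t' k)) → 𝒜 (.func f t) = 𝒜 (.func f t')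

/-- The universe of an orderly algebra: its range on orderly terms. -/
def OAUniv (𝒜 : Tm F → β) : Set β := 𝒜 '' { t | t.Orderly }

/-- `ℬ` is a reduction of the orderly algebra `𝒜` (as functions on orderly terms). -/
def OAReduction (ℬ 𝒜 : Tm F → β) : Prop :=
  ∃ ts : ℕ → Tm F, Tm.Admissible ts ∧ ∀ s : Tm F, s.Orderly → ℬ s = 𝒜 (s.subst ts)

/-- `ℬ` is homogeneous for `X`. -/
def Homog (ℬ : Tm F → β) (X : Set β) : Prop :=
  OAUniv ℬ ⊆ X ∨ OAUniv ℬ ∩ X = ∅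

/-- An orderly algebra is weakly Ramsey. -/
def WeaklyRamseyOA (𝒜 : Tm F → β) : Prop :=
  ∀ X ⊆ OAUniv 𝒜, ∃ ℬ, OAReduction ℬ 𝒜 ∧ Homog ℬ X

/-- An orderly algebra is Ramsey. -/
def RamseyOA (𝒜 : Tm F → β) : Prop :=
  ∀ ℬ, OAReduction ℬ 𝒜 → ∀ X ⊆ OAUniv 𝒜, ∃ 𝒞, OAReduction 𝒞 ℬ ∧ Homog 𝒞 X

/-- The orderly algebra induced from the algebra `(A, I)` by the sequence `a`. -/
def inducedOA (I : ∀ n, F n → (Fin n → A) → A) (a : ℕ → A) : Tm F → A :=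
  fun t => t.realize I a

/-- `[FR(c)]ⁿ_<` : increasing `n`-tuples of finite reductions of `c`. -/
def FRtuple (I : ∀ n, F n → (Fin n → A) → A) (n : ℕ) (c : ℕ → A) : Set (Fin n → A) :=
  { x | ∃ t : Fin n → Tm F, OrdTuple t ∧ ∀ i, x i = (t i).realize I c }

/-- `‖𝒞‖ⁿ_<` for an orderly algebra `𝒞`. -/
def OATuple (n : ℕ) (𝒞 : Tm F → β) : Set (Fin n → β) :=
  { x | ∃ t : Fin n → Tm F, OrdTuple t ∧ ∀ i, x i = 𝒞 (t i) }

/-- The basic set `[n, a]` of the preorder with approximations `(ᵂA, ≤)`. -/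
def Approx (I : ∀ n, F n → (Fin n → A) → A) (n : ℕ) (a : ℕ → A) : Set (ℕ → A) :=
  { b | SeqReduction I b a ∧ ∀ i < n, b i = a i }

/-- The natural topology on `ᵂA`, generated by the sets `[n, a]`. -/
def natTop (I : ∀ n, F n → (Fin n → A) → A) : TopologicalSpace (ℕ → A) :=
  TopologicalSpace.generateFrom { S | ∃ n a, S = Approx I n a }

/-- A subset `X ⊆ ᵂA` is Ramsey. -/
def RamseySet (I : ∀ n, F n → (Fin n → A) → A) (X : Set (ℕ → A)) : Prop :=
  ∀ (n : ℕ) (a : ℕ → A), ∃ b ∈ Approx I n a,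
    Approx I n b ⊆ X ∨ Approx I n b ∩ X = ∅

/-- `X` has the property of Baire in the natural topology:
its symmetric difference with some open set is meager. -/
def HasBaireProperty (I : ∀ n, F n → (Fin n → A) → A) (X : Set (ℕ → A)) : Prop :=
  ∃ U : Set (ℕ → A), @IsOpen _ (natTop I) U ∧ @IsMeagre _ (natTop I) (symmDiff X U)

end General

/-- The language with a single binary function symbol. -/
inductive BinF : ℕ → Type
  | f : BinF 2

/-- Application of the binary function symbol: the term `f s t`. -/
def fapp (s t : Tm BinF) : Tm BinF := .func BinF.f ![s, t]

/-- The interpretation of the single binary function symbol by a binary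
operation `g` on `A`. -/
def binI {A : Type v} (g : A → A → A) : ∀ n, BinF n → (Fin n → A) → A
  | _, BinF.f, args => g (args 0) (args 1)

/-- The pair `(tˣ, tʸ)`: `(vᵢˣ, vᵢʸ) = (v_{2i}, v_{2i+1})` and
`((f s t)ˣ, (f s t)ʸ) = (f sˣ sʸ, f tˣ tʸ)`. -/
def xyPair : Tm BinF → Tm BinF × Tm BinF
  | .var i => (.var (2 * i), .var (2 * i + 1))
  | .func BinF.f ts =>
      (fapp (xyPair (ts 0)).1 (xyPair (ts 0)).2, fapp (xyPair (ts 1)).1 (xyPair (ts 1)).2)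

/-- The orderly algebra `♯𝒜`, `♯𝒜(t) = (𝒜(tˣ), 𝒜(tʸ))`. -/
def sharpOA {β : Type w} (𝒜 : Tm BinF → β) : Tm BinF → β × β :=
  fun t => (𝒜 (xyPair t).1, 𝒜 (xyPair t).2)
section Toolbox

open Tm List

variable {F : ℕ → Type u} {A : Type v}

namespace Tm

/-- last variable (index) of a term -/
def maxV (t : Tm F) : ℕ := t.varList.getLast?.getD 0
/-- first variable (index) of a term -/
def minV (t : Tm F) : ℕ := t.varList.head?.getD 0

variable [IsEmpty (F 0)]

theorem varList_ne_nil (t : Tm F) : t.varList ≠ [] := by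
  induction t with
  | var i => simp [varList]
  | func f ts ih =>
    rename_i n
    cases n with
    | zero => exact isEmptyElim f
    | succ m =>
      intro h
      obtain ⟨x, hx⟩ := List.exists_mem_of_ne_nil _ (ih 0)
      have : x ∈ (Tm.func f ts).varList :=
        List.mem_flatMap_of_mem (List.mem_finRange 0) hx
      rw [h] at this; exact List.not_mem_nil this

theorem maxV_mem (t : Tm F) : t.maxV ∈ t.varList := by
  rw [maxV, List.getLast?_eq_getLast (varList_ne_nil t)]
  simp only [Option.getD_some]; exact List.getLast_mem _

theorem minV_mem (t : Tm F) : t.minV ∈ t.varList := by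
  rw [minV, List.head?_eq_head (varList_ne_nil t)]
  simp only [Option.getD_some]; exact List.head_mem _

theorem getLast?_eq_maxV (t : Tm F) : t.varList.getLast? = some t.maxV := by
  rw [maxV, List.getLast?_eq_getLast (varList_ne_nil t)]; rfl

theorem head?_eq_minV (t : Tm F) : t.varList.head? = some t.minV := by
  rw [minV, List.head?_eq_head (varList_ne_nil t)]; rfl

theorem termLT_iff {s t : Tm F} : TermLT s t ↔ s.maxV < t.minV := by
  constructor
  · rintro ⟨i, j, hi, hj, hij⟩
    rw [getLast?_eq_maxV] at hi; rw [head?_eq_minV] at hj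
    cases hi; cases hj; exact hij
  · intro h; exact ⟨_, _, getLast?_eq_maxV s, head?_eq_minV t, h⟩

theorem orderly_iff_pairwise {t : Tm F} : t.Orderly ↔ t.varList.Pairwise (· < ·) :=
  List.isChain_iff_pairwise

end Tm

/- list helpers -/
theorem getLastD_mem {l : List ℕ} (h : l ≠ []) : l.getLast?.getD 0 ∈ l := by
  rw [List.getLast?_eq_getLast h]
  simp only [Option.getD_some]; exact List.getLast_mem _

theorem pw_le_getLast : ∀ {l : List ℕ}, l.Pairwise (· < ·) → ∀ x ∈ l, x ≤ l.getLast?.getD 0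
  | [], _, x, hx => absurd hx List.not_mem_nil
  | a :: l, hp, x, hx => by
      cases l with
      | nil => simp at hx; simp [hx]
      | cons b l' =>
        have hgl : (a :: b :: l').getLast?.getD 0 = (b :: l').getLast?.getD 0 := by
          rw [List.getLast?_cons_cons]
        rw [hgl]
        rcases List.mem_cons.1 hx with rfl | hx'
        · have h1 := (List.pairwise_cons.1 hp).1
          have hm := getLastD_mem (l := b :: l') (by simp)
          exact le_of_lt (h1 _ hm)
        · exact pw_le_getLast (List.pairwise_cons.1 hp).2 x hx'

theorem pw_head_le : ∀ {l : List ℕ}, l.Pairwise (· < ·) → ∀ x ∈ l, l.head?.getD 0 ≤ x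
  | [], _, x, hx => absurd hx List.not_mem_nil
  | a :: l, hp, x, hx => by
      rcases List.mem_cons.1 hx with rfl | hx'
      · simp
      · simp only [List.head?_cons, Option.getD_some]
        exact le_of_lt ((List.pairwise_cons.1 hp).1 x hx')

namespace Tm
variable [IsEmpty (F 0)]

theorem le_maxV {t : Tm F} (ht : t.Orderly) {v : ℕ} (hv : v ∈ t.varList) : v ≤ t.maxV :=
  pw_le_getLast (orderly_iff_pairwise.1 ht) v hv

theorem minV_le {t : Tm F} (ht : t.Orderly) {v : ℕ} (hv : v ∈ t.varList) : t.minV ≤ v :=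
  pw_head_le (orderly_iff_pairwise.1 ht) v hv

theorem termLT_of_mem {s t : Tm F}
    (h : ∀ x ∈ s.varList, ∀ y ∈ t.varList, x < y) : TermLT s t :=
  termLT_iff.2 (h _ (maxV_mem s) _ (minV_mem t))

theorem termLT_mem {s t : Tm F} (hs : s.Orderly) (ht : t.Orderly) (h : TermLT s t) :
    ∀ x ∈ s.varList, ∀ y ∈ t.varList, x < y := fun x hx y hy =>
  lt_of_le_of_lt (le_maxV hs hx) (lt_of_lt_of_le (termLT_iff.1 h) (minV_le ht hy))

end Tm

namespace Tm

theorem varList_subst (σ : ℕ → Tm F) :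
    ∀ t : Tm F, (t.subst σ).varList = t.varList.flatMap fun v => (σ v).varList
  | .var i => by simp [subst, varList]
  | .func (n := n) f ts => by
      show (List.finRange n).flatMap (fun i => ((ts i).subst σ).varList) = _
      rw [show (Tm.func f ts).varList = (List.finRange n).flatMap (fun i => (ts i).varList) from rfl,
        List.flatMap_assoc]
      exact List.flatMap_congr (by intro i _; exact varList_subst σ (ts i))

theorem mem_varList_subst {σ : ℕ → Tm F} {t : Tm F} {w : ℕ} :
    w ∈ (t.subst σ).varList ↔ ∃ v ∈ t.varList, w ∈ (σ v).varList := by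
  rw [varList_subst]; exact List.mem_flatMap

theorem realize_subst (I : ∀ n, F n → (Fin n → A) → A) (σ : ℕ → Tm F) (a : ℕ → A) :
    ∀ t : Tm F, (t.subst σ).realize I a = t.realize I fun v => (σ v).realize I a
  | .var i => rfl
  | .func (n := n) f ts => by
      show I n f _ = I n f _
      exact congrArg _ (funext fun i => realize_subst I σ a (ts i))

theorem realize_congr (I : ∀ n, F n → (Fin n → A) → A) {a b : ℕ → A} :
    ∀ {t : Tm F}, (∀ v ∈ t.varList, a v = b v) → t.realize I a = t.realize I b
  | .var i, h => h i (by simp [varList])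
  | .func (n := n) f ts, h => by
      show I n f _ = I n f _
      refine congrArg _ (funext fun i => realize_congr I fun v hv => h v ?_)
      exact List.mem_flatMap_of_mem (List.mem_finRange i) hv

variable [IsEmpty (F 0)]

theorem orderly_subst {σ : ℕ → Tm F} {t : Tm F} (ht : t.Orderly)
    (h1 : ∀ v ∈ t.varList, (σ v).Orderly)
    (h2 : ∀ v ∈ t.varList, ∀ w ∈ t.varList, v < w →
      ∀ x ∈ (σ v).varList, ∀ y ∈ (σ w).varList, x < y) :
    (t.subst σ).Orderly := by
  rw [orderly_iff_pairwise, varList_subst, List.pairwise_flatMap]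
  refine ⟨fun v hv => orderly_iff_pairwise.1 (h1 v hv), ?_⟩
  have := orderly_iff_pairwise.1 ht
  exact List.Pairwise.imp_of_mem (fun hv hw hlt => h2 _ hv _ hw hlt) this

end Tm

section Adm
variable [IsEmpty (F 0)]
open Tm

theorem adm_mem_lt {τ : ℕ → Tm F} (h : Tm.Admissible τ) {i j : ℕ} (hij : i < j) :
    ∀ x ∈ (τ i).varList, ∀ y ∈ (τ j).varList, x < y := by
  induction j with
  | zero => omega
  | succ m ih =>
    intro x hx y hy
    rcases Nat.lt_succ_iff_lt_or_eq.1 hij with hlt | rfl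
    · have h1 := ih hlt x hx (τ m).maxV (maxV_mem _)
      have h2 := termLT_mem (h.1 m) (h.1 (m+1)) (h.2 m) _ (maxV_mem (τ m)) y hy
      omega
    · exact termLT_mem (h.1 i) (h.1 (i+1)) (h.2 i) x hx y hy

theorem adm_le_mem {τ : ℕ → Tm F} (h : Tm.Admissible τ) :
    ∀ (i : ℕ), ∀ x ∈ (τ i).varList, i ≤ x := by
  intro i
  induction i with
  | zero => intro x _; omega
  | succ m ih =>
    intro x hx
    have h1 := ih _ (maxV_mem (τ m))
    have h2 := adm_mem_lt h (Nat.lt_succ_self m) _ (maxV_mem (τ m)) x hx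
    omega

theorem adm_subst {τ σ : ℕ → Tm F} (hτ : Tm.Admissible τ) (hσ : Tm.Admissible σ) :
    Tm.Admissible fun i => (τ i).subst σ := by
  constructor
  · intro i
    exact orderly_subst (hτ.1 i) (fun v _ => hσ.1 v)
      (fun v _ w _ hvw => adm_mem_lt hσ hvw)
  · intro i
    refine termLT_of_mem ?_
    intro x hx y hy
    obtain ⟨v, hv, hxv⟩ := mem_varList_subst.1 hx
    obtain ⟨w, hw, hyw⟩ := mem_varList_subst.1 hy
    exact adm_mem_lt hσ (termLT_mem (hτ.1 i) (hτ.1 (i+1)) (hτ.2 i) v hv w hw) x hxv y hyw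

end Adm

end Toolbox


section Machinery

open Tm

variable {F : ℕ → Type u} {A : Type v} [IsEmpty (F 0)]
variable (I : ∀ n, F n → (Fin n → A) → A)

theorem adm_var {f : ℕ → ℕ} (hf : StrictMono f) :
    Tm.Admissible (fun i => (Tm.var (f i) : Tm F)) := by
  constructor
  · intro i; simp [Tm.Orderly, Tm.varList, List.Chain']
  · intro i
    exact ⟨f i, f (i+1), by simp [Tm.varList], by simp [Tm.varList], hf (Nat.lt_succ_self i)⟩

theorem adm_tail {τ : ℕ → Tm F} (h : Tm.Admissible τ) (N : ℕ) :
    Tm.Admissible (fun j => τ (N + j)) :=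
  ⟨fun j => h.1 _, fun j => by have := h.2 (N + j); rwa [Nat.add_succ] at this⟩

theorem glue_adm {τ : ℕ → Tm F} (hτ : Tm.Admissible τ) (N : ℕ)
    (hge : ∀ j, ∀ w ∈ (τ j).varList, N ≤ w) :
    Tm.Admissible (fun i => if i < N then (Tm.var i : Tm F) else τ (i - N)) := by
  constructor
  · intro i
    by_cases h : i < N
    · simp only [h, if_pos]; simp [Tm.Orderly, Tm.varList, List.Chain']
    · simp only [h, if_neg, not_false_iff]; exact hτ.1 _
  · intro i
    rcases Nat.lt_or_ge (i+1) N with h1 | h1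
    · have h0 : i < N := by omega
      simp only [h0, h1, if_pos]
      exact ⟨i, i+1, by simp [Tm.varList], by simp [Tm.varList], Nat.lt_succ_self i⟩
    rcases Nat.lt_or_ge i N with h0 | h0
    · simp only [h0, if_pos, Nat.not_lt.2 h1, if_neg, not_false_iff, Nat.lt_irrefl]
      refine Tm.termLT_of_mem ?_
      intro x hx y hy
      simp [Tm.varList] at hx
      subst hx
      exact lt_of_lt_of_le h0 (hge _ _ hy)
    · have h0' : ¬ i < N := Nat.not_lt.2 h0
      have h1' : ¬ i + 1 < N := by omega
      simp only [h0', h1', if_neg, not_false_iff]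
      have : i + 1 - N = (i - N) + 1 := by omega
      rw [this]
      exact hτ.2 _

/-- canonical reduction with frozen prefix of length `N`. -/
def Red (N : ℕ) (b' b : ℕ → A) : Prop :=
  ∃ τ : ℕ → Tm F, Tm.Admissible τ ∧ (∀ i < N, τ i = .var i) ∧ ∀ i, b' i = (τ i).realize I b

theorem red_refl (N : ℕ) (b : ℕ → A) : Red I N b b :=
  ⟨fun i => .var i, adm_var strictMono_id, fun _ _ => rfl, fun _ => rfl⟩

theorem red_weaken {M N : ℕ} (h : M ≤ N) {b' b : ℕ → A} (hr : Red I N b' b) :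
    Red I M b' b := by
  obtain ⟨τ, h1, h2, h3⟩ := hr
  exact ⟨τ, h1, fun i hi => h2 i (lt_of_lt_of_le hi h), h3⟩

theorem red_agree {N : ℕ} {b' b : ℕ → A} (hr : Red I N b' b) : ∀ i < N, b' i = b i := by
  obtain ⟨τ, _, h2, h3⟩ := hr
  intro i hi; rw [h3 i, h2 i hi]; rfl

theorem red_trans {N : ℕ} {x y z : ℕ → A} (h1 : Red I N x y) (h2 : Red I N y z) :
    Red I N x z := by
  obtain ⟨τ1, a1, p1, r1⟩ := h1
  obtain ⟨τ2, a2, p2, r2⟩ := h2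
  refine ⟨fun i => (τ1 i).subst τ2, adm_subst a1 a2, fun i hi => by
    show Tm.subst τ2 (τ1 i) = Tm.var i
    rw [p1 i hi]; exact p2 i hi, ?_⟩
  intro i
  show x i = ((τ1 i).subst τ2).realize I z
  rw [r1 i, Tm.realize_subst]
  congr 1
  exact funext fun v => r2 v

theorem red_vars_ge {N : ℕ} {b' b : ℕ → A} (hr : Red I N b' b) :
    ∃ τ : ℕ → Tm F, Tm.Admissible τ ∧ (∀ i < N, τ i = .var i) ∧
      (∀ i, ∀ w ∈ (τ i).varList, i ≤ w) ∧ ∀ i, b' i = (τ i).realize I b := by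
  obtain ⟨τ, h1, h2, h3⟩ := hr
  exact ⟨τ, h1, h2, fun i => adm_le_mem h1 i, h3⟩

theorem seqReduction_of_red {N : ℕ} {b' b : ℕ → A} (hr : Red I N b' b) :
    SeqReduction I b' b := by
  obtain ⟨τ, h1, _, h3⟩ := hr; exact ⟨τ, h1, h3⟩

theorem red_iff_approx {N : ℕ} {b' b : ℕ → A} : Red I N b' b ↔ b' ∈ Approx I N b := by
  constructor
  · intro hr
    exact ⟨seqReduction_of_red I hr, red_agree I hr⟩
  · rintro ⟨⟨ts, hadm, hreal⟩, hag⟩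
    refine ⟨fun i => if i < N then .var i else ts (N + (i - N)), ?_, fun i hi => by simp [hi], ?_⟩
    · exact glue_adm (adm_tail hadm N) N
        (fun j w hw => le_trans (Nat.le_add_right N j) (adm_le_mem hadm _ w hw))
    · intro i
      by_cases hi : i < N
      · simp only [hi, if_pos]; exact hag i hi
      · simp only [hi, if_neg, not_false_iff]
        have : N + (i - N) = i := by omega
        rw [this]; exact hreal i

/-- tail of `c` beyond position `m` is generated from `b` by terms with variables `≥ N`. -/
def ETail (N m : ℕ) (c b : ℕ → A) : Prop :=
  ∃ τ : ℕ → Tm F, Tm.Admissible τ ∧ (∀ j, ∀ w ∈ (τ j).varList, N ≤ w) ∧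
    ∀ j, c (m + j) = (τ j).realize I b

/-- the set of extensions of the stem `v` with tails generated from `b` using variables `≥ N`. -/
def ExtS (v : List A) (N : ℕ) (b : ℕ → A) : Set (ℕ → A) :=
  { c | (∀ i : Fin v.length, c i = v.get i) ∧ ETail I N v.length c b }

theorem ext_mono {v : List A} {N : ℕ} {e b : ℕ → A} (hr : Red I N e b) :
    ExtS I v N e ⊆ ExtS I v N b := by
  obtain ⟨σ, hσ, hp, hreal⟩ := hr
  rintro c ⟨hstem, τ, hτ, hge, htail⟩
  refine ⟨hstem, fun j => (τ j).subst σ, adm_subst hτ hσ, ?_, ?_⟩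
  · intro j w hw
    obtain ⟨u, hu, hwu⟩ := Tm.mem_varList_subst.1 hw
    exact le_trans (hge j u hu) (adm_le_mem hσ u w hwu)
  · intro j
    rw [htail j, Tm.realize_subst]
    congr 1
    exact funext fun v => hreal v

theorem ext_anti {v : List A} {N N' : ℕ} (h : N ≤ N') {b : ℕ → A} :
    ExtS I v N' b ⊆ ExtS I v N b := by
  rintro c ⟨hstem, τ, hτ, hge, htail⟩
  exact ⟨hstem, τ, hτ, fun j w hw => le_trans h (hge j w hw), htail⟩

theorem ext_shift {v : List A} {P Q : ℕ} {e' e : ℕ → A}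
    (h : ∀ l, e' (P + l) = e (Q + l)) : ExtS I v P e' ⊆ ExtS I v Q e := by
  rintro c ⟨hstem, τ, hτ, hge, htail⟩
  refine ⟨hstem, fun j => (τ j).subst (fun u => .var (u - P + Q)), ?_, ?_, ?_⟩
  · constructor
    · intro j
      refine orderly_subst (hτ.1 j) (fun v _ => by simp [Tm.Orderly, Tm.varList, List.Chain']) ?_
      intro a ha b hb hab x hx y hy
      simp [Tm.varList] at hx hy
      subst hx; subst hy
      have := hge j a ha; have := hge j b hb
      omega
    · intro j
      refine Tm.termLT_of_mem ?_
      intro x hx y hy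
      obtain ⟨a, ha, hxa⟩ := Tm.mem_varList_subst.1 hx
      obtain ⟨b, hb, hyb⟩ := Tm.mem_varList_subst.1 hy
      simp [Tm.varList] at hxa hyb
      subst hxa; subst hyb
      have hab := Tm.termLT_mem (hτ.1 j) (hτ.1 (j+1)) (hτ.2 j) a ha b hb
      have := hge j a ha; have := hge (j+1) b hb
      omega
  · intro j w hw
    obtain ⟨u, _, hwu⟩ := Tm.mem_varList_subst.1 hw
    simp [Tm.varList] at hwu
    omega
  · intro j
    rw [htail j, Tm.realize_subst]
    refine Tm.realize_congr I ?_
    intro u hu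
    have hge' := hge j u hu
    show e' u = e (u - P + Q)
    have : u = P + (u - P) := by omega
    rw [this, h (u - P)]
    congr 1
    omega

theorem ext_nonempty (v : List A) (N : ℕ) (b : ℕ → A) :
    (fun i => if h : i < v.length then v.get ⟨i, h⟩ else b (N + (i - v.length))) ∈
      ExtS I v N b := by
  refine ⟨fun i => by simp [i.isLt], fun j => .var (N + j), ?_, ?_, ?_⟩
  · exact adm_var (fun i j hij => by omega)
  · intro j w hw; simp [Tm.varList] at hw; omega
  · intro j
    have h1 : ¬ v.length + j < v.length := by omega
    simp only [h1, dif_neg, not_false_iff]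
    have : v.length + j - v.length = j := by omega
    rw [this]; rfl

theorem approx_sub_ext {N : ℕ} {b' b : ℕ → A} (h : Red I N b' b) (v : List A)
    (hv : v.length = N) (hvg : ∀ i : Fin v.length, b i = v.get i) :
    b' ∈ ExtS I v N b := by
  obtain ⟨τ, h1, h2, h4, h3⟩ := red_vars_ge I h
  refine ⟨fun i => by
      rw [← hvg i]
      have hi : (i : ℕ) < N := by rw [← hv]; exact i.isLt
      rw [h3 i, h2 i hi]; rfl, fun j => τ (N + j), adm_tail h1 N, ?_, ?_⟩
  · intro j w hw
    exact le_trans (Nat.le_add_right N j) (h4 (N + j) w hw)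
  · intro j
    rw [hv]; exact h3 (N + j)

theorem ext_sub_approx {N : ℕ} {b : ℕ → A} {v : List A} (hv : v.length = N)
    (hvg : ∀ i : Fin v.length, b i = v.get i) {c : ℕ → A} (hc : c ∈ ExtS I v N b) :
    Red I N c b := by
  obtain ⟨hstem, τ, hτ, hge, htail⟩ := hc
  refine ⟨fun i => if i < N then .var i else τ (i - N), glue_adm hτ N hge,
    fun i hi => by simp [hi], ?_⟩
  intro i
  by_cases hi : i < N
  · simp only [hi, if_pos]
    show c i = b i
    have hi' : i < v.length := by omega
    rw [hstem ⟨i, hi'⟩, hvg ⟨i, hi'⟩]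
  · simp only [hi, if_neg, not_false_iff]
    rw [← htail (i - N)]
    congr 1
    omega

end Machinery


section Forcing

open Tm

variable {F : ℕ → Type u} {A : Type v} [IsEmpty (F 0)]
variable (I : ∀ n, F n → (Fin n → A) → A) (U : Set (ℕ → A))

def Accepts (v : List A) (N : ℕ) (b : ℕ → A) : Prop := ExtS I v N b ⊆ U

def Rejects (v : List A) (N : ℕ) (b : ℕ → A) : Prop :=
  ∀ e, Red I N e b → ¬ Accepts I U v N e

theorem accepts_mono {v : List A} {N : ℕ} {e b : ℕ → A} (hr : Red I N e b)
    (h : Accepts I U v N b) : Accepts I U v N e := fun c hc => h (ext_mono I hr hc)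

theorem accepts_up {v : List A} {N N' : ℕ} (hN : N ≤ N') {b : ℕ → A}
    (h : Accepts I U v N b) : Accepts I U v N' b := fun c hc => h (ext_anti I hN hc)

theorem rejects_mono {v : List A} {N : ℕ} {e b : ℕ → A} (hr : Red I N e b)
    (h : Rejects I U v N b) : Rejects I U v N e := fun e' he' => h e' (red_trans I he' hr)

theorem rejects_not_accepts {v : List A} {N : ℕ} {b : ℕ → A} (h : Rejects I U v N b) :
    ¬ Accepts I U v N b := h b (red_refl I N b)

theorem rejects_up {v : List A} {N N' : ℕ} (hN : N ≤ N') {b : ℕ → A}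
    (h : Rejects I U v N b) : Rejects I U v N' b := by
  intro e' he' hacc
  have h1 : Red I N (fun i => if i < N then e' i else e' (N' + (i - N))) e' := by
    refine ⟨fun i => if i < N then .var i else .var (N' + (i - N)), ?_,
      fun i hi => by simp [hi], ?_⟩
    · exact glue_adm (τ := fun j => (.var (N' + j) : Tm F))
        (adm_var (fun a b hab => by omega)) N
        (fun j w hw => by simp [Tm.varList] at hw; omega)
    · intro i
      by_cases hi : i < N <;> simp [hi, Tm.realize]
  have h2 : Accepts I U v N (fun i => if i < N then e' i else e' (N' + (i - N))) := by
    intro c hc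
    refine hacc (ext_shift I (e' := fun i => if i < N then e' i else e' (N' + (i - N)))
      (e := e') (P := N) (Q := N') ?_ hc)
    intro l
    have : ¬ N + l < N := by omega
    simp only [this, if_neg, not_false_iff]
    congr 1
    omega
  exact h _ (red_trans I h1 (red_weaken I hN he')) h2

theorem exists_decide (v : List A) (N : ℕ) (b : ℕ → A) :
    ∃ e, Red I N e b ∧ (Accepts I U v N e ∨ Rejects I U v N e) := by
  by_cases h : ∃ e, Red I N e b ∧ Accepts I U v N e
  · obtain ⟨e, h1, h2⟩ := h
    exact ⟨e, h1, Or.inl h2⟩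
  · refine ⟨b, red_refl I N b, Or.inr ?_⟩
    intro e he hacc
    exact h ⟨e, he, hacc⟩

theorem rejects_transfer {v : List A} {P Q : ℕ} {G H : ℕ → A} {σ : ℕ → Tm F}
    (hσ : Tm.Admissible σ) (hreal : ∀ i, H i = (σ i).realize I G)
    (hQ : ∀ j, Q ≤ j → ∀ w ∈ (σ j).varList, P ≤ w)
    (hrej : Rejects I U v P G) : Rejects I U v Q H := by
  intro e he hacc
  obtain ⟨τ, hτ, hp, hr⟩ := he
  have h1 : Red I P (fun i => if i < P then G i else e (Q + (i - P))) G := by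
    refine ⟨fun i => if i < P then .var i else ((τ (Q + (i - P))).subst σ), ?_,
      fun i hi => by simp [hi], ?_⟩
    · refine glue_adm (τ := fun j => (τ (Q + j)).subst σ)
        (adm_subst (adm_tail hτ Q) hσ) P ?_
      intro j w hw
      obtain ⟨u, hu, hwu⟩ := Tm.mem_varList_subst.1 hw
      have hu2 : Q + j ≤ u := adm_le_mem hτ _ u hu
      exact hQ u (by omega) w hwu
    · intro i
      by_cases hi : i < P
      · simp [hi, Tm.realize]
      · simp only [hi, if_neg, not_false_iff]
        rw [hr (Q + (i - P)), Tm.realize_subst]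
        congr 1
        exact funext fun u => hreal u
  have h2 : Accepts I U v P (fun i => if i < P then G i else e (Q + (i - P))) := by
    intro c hc
    refine hacc (ext_shift I (P := P) (Q := Q) ?_ hc)
    intro l
    have : ¬ P + l < P := by omega
    simp only [this, if_neg, not_false_iff]
    congr 1
    omega
  exact hrej _ h1 h2

/-- homogenisation of the set of values generated using variables `≥ M` (pigeonhole). -/
theorem pigeonhole (hRA : RamseyAlg I) (g : ℕ → A) (M : ℕ) (X : Set A) :
    ∃ h, Red I M h g ∧
      ((∀ t : Tm F, t.Orderly → (∀ w ∈ t.varList, M ≤ w) → t.realize I h ∈ X) ∨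
       (∀ t : Tm F, t.Orderly → (∀ w ∈ t.varList, M ≤ w) → t.realize I h ∉ X)) := by
  obtain ⟨b, hb, hhom⟩ := hRA (fun l => g (M + l)) X
  obtain ⟨ts, hts, hreal⟩ := hb
  refine ⟨fun i => if i < M then g i else b (i - M), ?_, ?_⟩
  · refine ⟨fun i => if i < M then .var i else (ts (i - M)).subst (fun v => .var (M + v)),
      ?_, fun i hi => by simp [hi], ?_⟩
    · refine glue_adm (τ := fun j => (ts j).subst (fun v => .var (M + v))) ?_ M ?_
      · exact adm_subst hts (adm_var (fun a b hab => by omega))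
      · intro j w hw
        obtain ⟨u, hu, hwu⟩ := Tm.mem_varList_subst.1 hw
        simp [Tm.varList] at hwu
        omega
    · intro i
      by_cases hi : i < M
      · simp [hi, Tm.realize]
      · simp only [hi, if_neg, not_false_iff]
        rw [hreal (i - M), Tm.realize_subst]
        rfl
  · have key : ∀ t : Tm F, t.Orderly → (∀ w ∈ t.varList, M ≤ w) →
        t.realize I (fun i => if i < M then g i else b (i - M)) ∈ FR I b := by
      intro t ht htge
      refine ⟨t.subst (fun v => .var (v - M)), ?_, ?_⟩
      · refine orderly_subst ht (fun v _ => by simp [Tm.Orderly, Tm.varList, List.Chain']) ?_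
        intro a ha c hc hac x hx y hy
        simp [Tm.varList] at hx hy
        have := htge a ha; have := htge c hc
        omega
      · rw [Tm.realize_subst]
        refine Tm.realize_congr I ?_
        intro u hu
        have := htge u hu
        have h2 : ¬ u < M := by omega
        simp only [h2, if_neg, not_false_iff]
        rfl
    rcases hhom with hin | hdisj
    · exact Or.inl fun t ht htge => hin (key t ht htge)
    · refine Or.inr fun t ht htge hmem => ?_
      have : t.realize I (fun i => if i < M then g i else b (i - M)) ∈ FR I b ∩ X :=
        ⟨key t ht htge, hmem⟩
      rw [hdisj] at this
      exact this

/-- all children of `v` (beyond `M`) are rejected, over `h`. -/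
def CRej (v : List A) (M : ℕ) (h : ℕ → A) : Prop :=
  ∀ t : Tm F, t.Orderly → (∀ w ∈ t.varList, M ≤ w) →
    Rejects I U (v ++ [t.realize I h]) (t.maxV + 1) h

theorem crej_transfer {v : List A} {M : ℕ} {e e' : ℕ → A} (h : CRej I U v M e)
    (hr : Red I M e' e) : CRej I U v M e' := by
  intro t ht htge
  obtain ⟨σ, hσ, hp, hreal⟩ := hr
  have ht' : (t.subst σ).Orderly :=
    orderly_subst ht (fun v _ => hσ.1 v) (fun a _ b _ hab => adm_mem_lt hσ hab)
  have ht'ge : ∀ w ∈ (t.subst σ).varList, M ≤ w := by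
    intro w hw
    obtain ⟨u, hu, hwu⟩ := Tm.mem_varList_subst.1 hw
    exact le_trans (htge u hu) (adm_le_mem hσ u w hwu)
  have hval : t.realize I e' = (t.subst σ).realize I e := by
    rw [Tm.realize_subst]
    exact Tm.realize_congr I fun u _ => hreal u
  have hP := h (t.subst σ) ht' ht'ge
  rw [hval]
  refine rejects_transfer I U hσ hreal ?_ hP
  intro j hj w hw
  have h1 : (t.subst σ).maxV ≤ (σ t.maxV).maxV := by
    obtain ⟨u, hu, hmu⟩ := Tm.mem_varList_subst.1 (maxV_mem (t.subst σ))
    have h2 := le_maxV (hσ.1 u) hmu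
    have h3 : u ≤ t.maxV := le_maxV ht hu
    rcases eq_or_lt_of_le h3 with rfl | hlt
    · exact h2
    · exact le_of_lt (adm_mem_lt hσ hlt _ hmu _ (maxV_mem (σ t.maxV)))
  have h4 : (σ t.maxV).maxV < w :=
    adm_mem_lt hσ (show t.maxV < j by omega) _ (maxV_mem _) w hw
  omega

end Forcing

section Fusion

open Tm

variable {F : ℕ → Type u} {A : Type v} [IsEmpty (F 0)]
variable (I : ∀ n, F n → (Fin n → A) → A)

theorem fusion (g : ℕ → A) (St : ℕ → (ℕ → A) → (ℕ → A) → Prop)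
    (hSt : ∀ k cur, ∃ nxt, Red I k nxt cur ∧ St k cur nxt) :
    ∃ (d : ℕ → ℕ → A) (dl : ℕ → A), d 0 = g ∧ (∀ k, Red I k (d (k+1)) (d k)) ∧
      (∀ k, St k (d k) (d (k+1))) ∧ (∀ k, Red I k dl (d k)) := by
  choose f hf1 hf2 using hSt
  let d : ℕ → ℕ → A := fun k => Nat.rec g (fun k cur => f k cur) k
  have hred : ∀ k, Red I k (d (k+1)) (d k) := fun k => hf1 k (d k)
  have hst : ∀ k, St k (d k) (d (k+1)) := fun k => hf2 k (d k)
  choose W hWa hWp hWr using hred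
  -- iterated composition of the witnesses
  let C : ℕ → ℕ → ℕ → Tm F := fun k =>
    fun j => Nat.rec (fun i => (.var i : Tm F)) (fun j Cj i => (W (k+j) i).subst Cj) j
  have hCa : ∀ k j, Tm.Admissible (C k j) := by
    intro k j
    induction j with
    | zero => exact adm_var strictMono_id
    | succ m ih => exact adm_subst (hWa (k+m)) ih
  have hCr : ∀ k j i, d (k+j) i = (C k j i).realize I (d k) := by
    intro k j
    induction j with
    | zero => intro i; rfl
    | succ m ih =>
      intro i
      show d (k+m+1) i = ((W (k+m) i).subst (C k m)).realize I (d k)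
      rw [hWr (k+m) i, Tm.realize_subst]
      congr 1
      exact funext fun u => ih u
  have hCs : ∀ k j i, i < k + j → C k (j+1) i = C k j i := by
    intro k j i hij
    show (W (k+j) i).subst (C k j) = C k j i
    rw [hWp (k+j) i hij]
    rfl
  have hCss : ∀ k j j' i, i < k + j → j ≤ j' → C k j' i = C k j i := by
    intro k j j' i hij hjj
    induction j', hjj using Nat.le_induction with
    | base => rfl
    | succ m hm ih => rw [hCs k m i (by omega), ih]
  have hCv : ∀ k j i, i < k → C k j i = .var i := by
    intro k j i hik
    have := hCss k 0 j i (by omega) (by omega)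
    rw [this]; rfl
  have hds : ∀ i k, i < k → d k i = d (i+1) i := by
    intro i k hik
    induction k with
    | zero => omega
    | succ m ih =>
      rcases Nat.lt_or_ge i m with him | him
      · show f m (d m) i = d (i+1) i
        rw [red_agree I (hf1 m (d m)) i him]
        exact ih him
      · have : i = m := by omega
        subst this; rfl
  refine ⟨d, fun i => d (i+1) i, rfl, fun k => hf1 k (d k), hst, ?_⟩
  intro k
  refine ⟨fun i => C k (i+1) i, ?_, ?_, ?_⟩
  · constructor
    · intro i; exact (hCa k (i+1)).1 i
    · intro i
      have h1 : C k (i+2) i = C k (i+1) i := hCss k (i+1) (i+2) i (by omega) (by omega)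
      show Tm.TermLT (C k (i+1) i) (C k (i+2) (i+1))
      rw [← h1]
      exact (hCa k (i+2)).2 i
  · intro i hik
    exact hCv k (i+1) i hik
  · intro i
    show d (i+1) i = (C k (i+1) i).realize I (d k)
    rcases Nat.lt_or_ge i k with hik | hik
    · rw [hCv k (i+1) i hik]
      show d (i+1) i = d k i
      rcases Nat.eq_or_lt_of_le (show i + 1 ≤ k from hik) with h | h
      · rw [h]
      · exact (hds i k hik).symm
    · have h1 : d (k + (i+1)) i = (C k (i+1) i).realize I (d k) := hCr k (i+1) i
      rw [← h1]
      exact (hds i (k + (i+1)) (by omega)).symm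
end Fusion


section Finiteness

open Tm

variable {F : ℕ → Type u} {A : Type v}

/-- size of a term -/
def tmSize : Tm F → ℕ
  | .var _ => 1
  | .func (n := n) _ ts => 1 + ∑ i : Fin n, tmSize (ts i)

theorem one_le_tmSize : ∀ t : Tm F, 1 ≤ tmSize t
  | .var _ => le_refl 1
  | .func _ _ => Nat.le_add_right 1 _

theorem length_le_of_pairwise_lt {l : List ℕ} {K : ℕ} (h : l.Pairwise (· < ·))
    (hb : ∀ x ∈ l, x < K) : l.length ≤ K := by
  have nd : l.Nodup := h.imp ne_of_lt
  have hsub : l.toFinset ⊆ Finset.range K :=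
    fun x hx => Finset.mem_range.2 (hb x (List.mem_toFinset.1 hx))
  calc l.length = l.toFinset.card := (List.toFinset_card_of_nodup nd).symm
    _ ≤ (Finset.range K).card := Finset.card_le_card hsub
    _ = K := Finset.card_range K

theorem orderly_child {n : ℕ} {f : F n} {ts : Fin n → Tm F}
    (h : (Tm.func f ts).Orderly) (i : Fin n) : (ts i).Orderly := by
  rw [Tm.Orderly, List.Chain', List.isChain_iff_pairwise] at h
  rw [Tm.Orderly, List.Chain', List.isChain_iff_pairwise]
  have := (List.pairwise_flatMap.1 h).1
  exact this i (List.mem_finRange i)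

theorem tmSize_le [IsEmpty (F 0)] [IsEmpty (F 1)] :
    ∀ t : Tm F, t.Orderly → tmSize t + 1 ≤ 2 * t.varList.length := by
  intro t
  induction t with
  | var i => intro _; simp [tmSize, Tm.varList]
  | func f ts ih =>
    rename_i n
    intro ht
    match n, f, ts, ih, ht with
    | 0, f, _, _, _ => exact isEmptyElim f
    | 1, f, _, _, _ => exact isEmptyElim f
    | (m+2), f, ts, ih, ht =>
      have hlen : ((Tm.func f ts).varList).length =
          ∑ i : Fin (m+2), ((ts i).varList).length := by
        show ((List.finRange (m+2)).flatMap fun i => (ts i).varList).length = _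
        rw [List.length_flatMap, Fin.sum_univ_def]
      have hsum : ∑ i : Fin (m+2), (tmSize (ts i) + 1) ≤
          ∑ i : Fin (m+2), 2 * ((ts i).varList).length :=
        Finset.sum_le_sum fun i _ => ih i (orderly_child ht i)
      have h1 : tmSize (Tm.func f ts) + 1 = 2 + ∑ i : Fin (m+2), tmSize (ts i) := by
        show 1 + _ + 1 = _; omega
      have h2 : ∑ i : Fin (m+2), (tmSize (ts i) + 1) =
          (∑ i : Fin (m+2), tmSize (ts i)) + (m+2) := by
        rw [Finset.sum_add_distrib]
        simp
      rw [h1, hlen, Finset.mul_sum]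
      omega

theorem finite_tm_size [Finite (Σ n, F n)] :
    ∀ s K : ℕ, {t : Tm F | tmSize t ≤ s ∧ ∀ w ∈ t.varList, w < K}.Finite := by
  intro s
  induction s with
  | zero =>
    intro K
    refine Set.finite_empty.subset ?_
    rintro t ⟨h1, _⟩
    have := one_le_tmSize t
    omega
  | succ m ih =>
    intro K
    have hsub : {t : Tm F | tmSize t ≤ m + 1 ∧ ∀ w ∈ t.varList, w < K} ⊆
        ((fun i => (Tm.var i : Tm F)) '' {i | i < K}) ∪
        ⋃ (p : Σ n, F n), (fun c => (Tm.func p.2 c : Tm F)) ''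
          {c : Fin p.1 → Tm F | ∀ i, c i ∈ {t : Tm F | tmSize t ≤ m ∧ ∀ w ∈ t.varList, w < K}} := by
      rintro t ⟨hs, hv⟩
      cases t with
      | var i =>
        left
        exact ⟨i, hv i (by simp [Tm.varList]), rfl⟩
      | func f ts =>
        rename_i n
        right
        have hmem : ∀ i : Fin n, ts i ∈
            {t : Tm F | tmSize t ≤ m ∧ ∀ w ∈ t.varList, w < K} := by
          intro i
          constructor
          · have hle : tmSize (ts i) ≤ ∑ j : Fin n, tmSize (ts j) :=
              Finset.single_le_sum (f := fun j => tmSize (ts j))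
                (fun j _ => Nat.zero_le _) (Finset.mem_univ i)
            have : tmSize (Tm.func f ts) = 1 + ∑ j : Fin n, tmSize (ts j) := rfl
            omega
          · intro w hw
            exact hv w (List.mem_flatMap_of_mem (List.mem_finRange i) hw)
        exact Set.mem_iUnion.2 ⟨⟨n, f⟩, ts, fun i => hmem i, rfl⟩
    refine Set.Finite.subset ?_ hsub
    refine Set.Finite.union ((Set.finite_Iio K).image _) ?_
    refine Set.finite_iUnion fun p => Set.Finite.image _ ?_
    have : {c : Fin p.1 → Tm F | ∀ i, c i ∈ {t : Tm F | tmSize t ≤ m ∧ ∀ w ∈ t.varList, w < K}} =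
        Set.pi Set.univ (fun _ : Fin p.1 => {t : Tm F | tmSize t ≤ m ∧ ∀ w ∈ t.varList, w < K}) := by
      ext c; simp [Set.mem_pi]
    rw [this]
    exact Set.Finite.pi fun _ => ih K

theorem finite_orderly_bdd [IsEmpty (F 0)] [IsEmpty (F 1)] [Finite (Σ n, F n)] (K : ℕ) :
    {t : Tm F | t.Orderly ∧ ∀ w ∈ t.varList, w < K}.Finite := by
  refine (finite_tm_size (2 * K) K).subset ?_
  rintro t ⟨ho, hv⟩
  refine ⟨?_, hv⟩
  have h1 := tmSize_le t ho
  have h2 : t.varList.length ≤ K :=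
    length_le_of_pairwise_lt (Tm.orderly_iff_pairwise.1 ho) hv
  omega

theorem finite_bddLists {α : Type*} {S : Set α} (hS : S.Finite) :
    ∀ n : ℕ, {l : List α | (∀ x ∈ l, x ∈ S) ∧ l.length ≤ n}.Finite := by
  intro n
  induction n with
  | zero =>
    refine (Set.finite_singleton ([] : List α)).subset ?_
    rintro l ⟨_, hl⟩
    simp [List.length_eq_zero_iff.1 (Nat.le_zero.1 hl)]
  | succ m ih =>
    have hsub : {l : List α | (∀ x ∈ l, x ∈ S) ∧ l.length ≤ m + 1} ⊆
        insert [] (Set.image2 List.cons S {l : List α | (∀ x ∈ l, x ∈ S) ∧ l.length ≤ m}) := by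
      rintro l ⟨hmem, hlen⟩
      cases l with
      | nil => exact Set.mem_insert _ _
      | cons x l' =>
        refine Set.mem_insert_of_mem _ ?_
        exact ⟨x, hmem x (by simp), l', ⟨fun y hy => hmem y (by simp [hy]), by
          simp at hlen; omega⟩, rfl⟩
    exact Set.Finite.subset (((hS.image2 _ ih)).insert []) hsub

end Finiteness


section Core

open Tm

variable {F : ℕ → Type u} {A : Type v} [IsEmpty (F 0)]
variable (I : ∀ n, F n → (Fin n → A) → A) (U : Set (ℕ → A))

theorem mem_ext_snoc {v : List A} {x : A} {N : ℕ} {b c : ℕ → A}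
    (hstem : ∀ i : Fin v.length, c i = v.get i) (hx : c v.length = x)
    (htail : ETail I N (v.length + 1) c b) : c ∈ ExtS I (v ++ [x]) N b := by
  constructor
  · intro i
    rw [List.get_eq_getElem]
    rcases Nat.lt_or_ge (i : ℕ) v.length with hlt | hge
    · rw [List.getElem_append_left hlt]
      have := hstem ⟨i, hlt⟩
      rw [this]
      simp
    · have hi : (i : ℕ) < v.length + 1 := by
        have h2 := i.isLt
        simpa using h2
      have hieq : (i : ℕ) = v.length := by omega
      rw [List.getElem_concat_length hieq, hieq]
      exact hx
  · have hlen : (v ++ [x]).length = v.length + 1 := by simp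
    rw [hlen]
    exact htail

theorem exists_term_list [IsEmpty (F 1)] [Finite (Σ n, F n)] (K : ℕ) :
    ∃ L : List (Tm F), ∀ t : Tm F,
      (t.Orderly ∧ ∀ w ∈ t.varList, w < K) ↔ t ∈ L := by
  refine ⟨(finite_orderly_bdd (F := F) K).toFinset.toList, fun t => ?_⟩
  rw [Finset.mem_toList, Set.Finite.mem_toFinset]
  exact Iff.rfl

theorem decide_list (k : ℕ) (w : List A) :
    ∀ (L : List (Tm F)) (cur : ℕ → A), (∀ t ∈ L, ∀ v ∈ t.varList, v < k) →
    ∃ nxt, Red I k nxt cur ∧ ∀ t ∈ L,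
      Accepts I U (w ++ [t.realize I nxt]) k nxt ∨
      Rejects I U (w ++ [t.realize I nxt]) k nxt := by
  intro L
  induction L with
  | nil => exact fun cur _ => ⟨cur, red_refl I k cur, fun t ht => absurd ht List.not_mem_nil⟩
  | cons t L' ih =>
    intro cur hbd
    obtain ⟨nxt', h1, h2⟩ := ih cur (fun t' ht' => hbd t' (by simp [ht']))
    obtain ⟨e, he1, he2⟩ := exists_decide I U (w ++ [t.realize I nxt']) k nxt'
    have hstab : ∀ t' : Tm F, (∀ v ∈ t'.varList, v < k) → t'.realize I e = t'.realize I nxt' :=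
      fun t' hb => Tm.realize_congr I (fun v hv => red_agree I he1 v (hb v hv))
    refine ⟨e, red_trans I he1 h1, ?_⟩
    intro s hs
    rcases List.mem_cons.1 hs with rfl | hs'
    · rw [hstab s (hbd s (by simp))]
      exact he2
    · have h3 := h2 s hs'
      rw [hstab s (hbd s (by simp [hs']))]
      rcases h3 with h3 | h3
      · exact Or.inl (accepts_mono I U he1 h3)
      · exact Or.inr (rejects_mono I U he1 h3)

theorem core [IsEmpty (F 1)] [Finite (Σ n, F n)] (hRA : RamseyAlg I)
    (w : List A) (M : ℕ) (g : ℕ → A) :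
    (∃ h, Red I M h g ∧ Accepts I U w M h) ∨ (∃ h, Red I M h g ∧ CRej I U w M h) := by
  have hstep : ∀ k cur, ∃ nxt, Red I k nxt cur ∧ ((k ≤ M → nxt = cur) ∧
      ∀ t : Tm F, t.Orderly → (∀ v ∈ t.varList, M ≤ v) → t.maxV + 1 = k →
        (Accepts I U (w ++ [t.realize I nxt]) k nxt ∨
         Rejects I U (w ++ [t.realize I nxt]) k nxt)) := by
    intro k cur
    rcases Nat.lt_or_ge M k with hMk | hMk
    · obtain ⟨L, hL⟩ := exists_term_list (F := F) k
      obtain ⟨nxt, h1, h2⟩ := decide_list I U k w L cur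
        (fun t ht v hv => by
          have := ((hL t).2 ht).2 v hv
          exact this)
      refine ⟨nxt, h1, fun hk => absurd hk (by omega), ?_⟩
      intro t ht hge hmax
      refine h2 t ((hL t).1 ⟨ht, ?_⟩)
      intro v hv
      have := Tm.le_maxV ht hv
      omega
    · refine ⟨cur, red_refl I k cur, fun _ => rfl, ?_⟩
      intro t ht hge hmax
      have := hge t.maxV (maxV_mem t)
      omega
  obtain ⟨d, dl, hd0, hdred, hdst, hdl⟩ := fusion I g _ hstep
  have hdM : ∀ k, k ≤ M → d k = g := by
    intro k hk
    induction k with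
    | zero => exact hd0
    | succ m ih =>
      rw [(hdst m).1 (by omega)]
      exact ih (by omega)
  have hRedMg : Red I M dl g := by
    have h := hdl M
    rwa [hdM M (le_refl M)] at h
  have DEC : ∀ t : Tm F, t.Orderly → (∀ v ∈ t.varList, M ≤ v) →
      (Accepts I U (w ++ [t.realize I dl]) (t.maxV + 1) dl ∨
       Rejects I U (w ++ [t.realize I dl]) (t.maxV + 1) dl) := by
    intro t ht hge
    have hst := (hdst (t.maxV + 1)).2 t ht hge rfl
    have hred : Red I (t.maxV + 1) dl (d (t.maxV + 1 + 1)) :=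
      red_weaken I (by omega) (hdl (t.maxV + 1 + 1))
    have hval : t.realize I dl = t.realize I (d (t.maxV + 1 + 1)) :=
      Tm.realize_congr I fun v hv => red_agree I hred v (by have := Tm.le_maxV ht hv; omega)
    rw [hval]
    rcases hst with h | h
    · exact Or.inl (accepts_mono I U hred h)
    · exact Or.inr (rejects_mono I U hred h)
  obtain ⟨h, hhred, hhom⟩ := pigeonhole I hRA dl M
    {x | ∃ N', Accepts I U (w ++ [x]) N' dl}
  obtain ⟨σ, hσa, hσp, hσr⟩ := hhred
  have hσred : Red I M h dl := ⟨σ, hσa, hσp, hσr⟩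
  have hcomp : ∀ t : Tm F, t.Orderly → (∀ v ∈ t.varList, M ≤ v) →
      ((t.subst σ).Orderly ∧ (∀ v ∈ (t.subst σ).varList, M ≤ v) ∧
        t.realize I h = (t.subst σ).realize I dl) := by
    intro t ht hge
    refine ⟨orderly_subst ht (fun v _ => hσa.1 v) (fun a _ b _ hab => adm_mem_lt hσa hab),
      ?_, ?_⟩
    · intro v hv
      obtain ⟨u, hu, hvu⟩ := Tm.mem_varList_subst.1 hv
      exact le_trans (hge u hu) (adm_le_mem hσa u v hvu)
    · rw [Tm.realize_subst]
      exact Tm.realize_congr I fun u _ => hσr u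
  rcases hhom with hpos | hneg
  · -- accepting side
    left
    refine ⟨h, red_trans I hσred hRedMg, ?_⟩
    rintro c ⟨hstem, τ, hτa, hτge, hτr⟩
    obtain ⟨hto, htge', hval⟩ := hcomp (τ 0) (hτa.1 0) (hτge 0)
    obtain ⟨N', hN'⟩ := hpos (τ 0) (hτa.1 0) (hτge 0)
    have hDec := DEC ((τ 0).subst σ) hto htge'
    rw [← hval] at hDec
    have hAccK : Accepts I U (w ++ [(τ 0).realize I h]) (((τ 0).subst σ).maxV + 1) dl := by
      rcases hDec with hD | hD
      · exact hD
      · exfalso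
        have h1 := rejects_up I U (le_max_left (((τ 0).subst σ).maxV + 1) N') hD
        have h2 := accepts_up I U (le_max_right (((τ 0).subst σ).maxV + 1) N') hN'
        exact rejects_not_accepts I U h1 h2
    refine hAccK (mem_ext_snoc I hstem ?_ ?_)
    · have := hτr 0
      rw [Nat.add_zero] at this
      exact this
    · refine ⟨fun j => (τ (1+j)).subst σ, adm_subst (adm_tail hτa 1) hσa, ?_, ?_⟩
      · intro j v hv
        obtain ⟨u, hu, hvu⟩ := Tm.mem_varList_subst.1 hv
        obtain ⟨u0, hu0, hmu0⟩ := Tm.mem_varList_subst.1 (maxV_mem ((τ 0).subst σ))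
        have hu0le : u0 ≤ (τ 0).maxV := Tm.le_maxV (hτa.1 0) hu0
        have huget : (τ 0).maxV < u :=
          adm_mem_lt hτa (show (0:ℕ) < 1 + j by omega) _ (maxV_mem (τ 0)) u hu
        have h4 := adm_mem_lt hσa (show u0 < u by omega) _ hmu0 v hvu
        omega
      · intro j
        have harith : w.length + 1 + j = w.length + (1 + j) := by omega
        rw [harith, hτr (1 + j), Tm.realize_subst]
        congr 1
        exact funext fun u => hσr u
  · -- rejecting side
    right
    refine ⟨h, red_trans I hσred hRedMg, ?_⟩
    intro t ht htge
    obtain ⟨hto, htge', hval⟩ := hcomp t ht htge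
    have hnx : ∀ N', ¬ Accepts I U (w ++ [t.realize I h]) N' dl := by
      intro N' hA
      exact hneg t ht htge ⟨N', hA⟩
    have hRej : Rejects I U (w ++ [t.realize I h]) ((t.subst σ).maxV + 1) dl := by
      rcases DEC (t.subst σ) hto htge' with hD | hD
      · rw [← hval] at hD
        exact absurd hD (hnx _)
      · rw [← hval] at hD
        exact hD
    refine rejects_transfer I U hσa hσr ?_ hRej
    intro j hj v hv
    have h1 : (t.subst σ).maxV ≤ (σ t.maxV).maxV := by
      obtain ⟨u, hu, hmu⟩ := Tm.mem_varList_subst.1 (maxV_mem (t.subst σ))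
      have h2 := Tm.le_maxV (hσa.1 u) hmu
      have h3 : u ≤ t.maxV := Tm.le_maxV ht hu
      rcases eq_or_lt_of_le h3 with rfl | hlt
      · exact h2
      · exact le_of_lt (adm_mem_lt hσa hlt _ hmu _ (maxV_mem (σ t.maxV)))
    have h4 : (σ t.maxV).maxV < v :=
      adm_mem_lt hσa (show t.maxV < j by omega) _ (maxV_mem _) v hv
    omega

end Core


section Master

open Tm

variable {F : ℕ → Type u} {A : Type v} [IsEmpty (F 0)]
variable (I : ∀ n, F n → (Fin n → A) → A) (U : Set (ℕ → A))

/-- well-formed finite stems of orderly terms with variables `≥ N`. -/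
def StemOK (N : ℕ) (ρ : List (Tm F)) : Prop :=
  (∀ t ∈ ρ, t.Orderly) ∧ (∀ t ∈ ρ, ∀ w ∈ t.varList, N ≤ w) ∧ ρ.Chain' Tm.TermLT

/-- the depth of a stem. -/
def stemD (N : ℕ) (ρ : List (Tm F)) : ℕ := ρ.getLast?.elim N fun t => t.maxV + 1

/-- values of a stem. -/
def stemVals (b : ℕ → A) (ρ : List (Tm F)) : List A := ρ.map fun t => t.realize I b

theorem stemD_nil (N : ℕ) : stemD N ([] : List (Tm F)) = N := rfl

theorem stemD_concat (N : ℕ) (ρ : List (Tm F)) (t : Tm F) :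
    stemD N (ρ ++ [t]) = t.maxV + 1 := by
  rw [stemD, List.getLast?_concat]
  rfl

theorem stemD_ge {N : ℕ} {ρ : List (Tm F)} (h : StemOK N ρ) : N ≤ stemD N ρ := by
  rcases List.eq_nil_or_concat ρ with rfl | ⟨ρ', t, rfl⟩
  · exact le_refl N
  · rw [List.concat_eq_append] at h ⊢
    rw [stemD_concat]
    have := h.2.1 t (by simp) t.maxV (maxV_mem t)
    omega

theorem stem_vars_lt {N : ℕ} : ∀ {ρ : List (Tm F)}, StemOK N ρ →
    ∀ t ∈ ρ, ∀ w ∈ t.varList, w < stemD N ρ := by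
  intro ρ
  induction ρ with
  | nil => intro _ t ht; exact absurd ht List.not_mem_nil
  | cons t0 ρ' ih =>
    intro hok t ht w hw
    cases ρ' with
    | nil =>
      have heq : t = t0 := by simpa using ht
      subst heq
      have h2 := Tm.le_maxV (hok.1 t (by simp)) hw
      have h3 : stemD N [t] = t.maxV + 1 := stemD_concat N [] t
      omega
    | cons t1 ρ'' =>
      have hD : stemD N (t0 :: t1 :: ρ'') = stemD N (t1 :: ρ'') := by
        simp [stemD, List.getLast?_cons_cons]
      rw [hD]
      have hok' : StemOK N (t1 :: ρ'') :=
        ⟨fun s hs => hok.1 s (by simp [hs]), fun s hs => hok.2.1 s (by simp [hs]),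
          (List.isChain_cons.1 hok.2.2).2⟩
      have hmin : t1.minV < stemD N (t1 :: ρ'') :=
        ih hok' t1 (by simp) t1.minV (minV_mem t1)
      rcases List.mem_cons.1 ht with rfl | ht'
      · have hLT : Tm.TermLT t t1 := (List.isChain_cons_cons.1 hok.2.2).1
        have := Tm.termLT_mem (hok.1 t (by simp)) (hok.1 t1 (by simp)) hLT w hw
          t1.minV (minV_mem t1)
        omega
      · exact ih hok' t ht' w hw

theorem stemOK_dropLast {N : ℕ} {ρ : List (Tm F)} (h : StemOK N ρ) (hne : ρ ≠ []) :
    StemOK N ρ.dropLast ∧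
    (∀ w ∈ (ρ.getLast hne).varList, stemD N ρ.dropLast ≤ w) ∧
    stemD N ρ = (ρ.getLast hne).maxV + 1 := by
  have hsplit : ρ.dropLast ++ [ρ.getLast hne] = ρ := List.dropLast_append_getLast hne
  have hsub : ∀ s ∈ ρ.dropLast, s ∈ ρ := fun s hs => (List.dropLast_sublist ρ).subset hs
  have hchain : (ρ.dropLast ++ [ρ.getLast hne]).Chain' Tm.TermLT := hsplit.symm ▸ h.2.2
  rw [List.Chain', List.isChain_append] at hchain
  refine ⟨⟨fun s hs => h.1 s (hsub s hs), fun s hs => h.2.1 s (hsub s hs), hchain.1⟩, ?_, ?_⟩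
  · intro w hw
    rcases List.eq_nil_or_concat ρ.dropLast with hnil | ⟨ρ', s, hcat⟩
    · rw [hnil, stemD_nil]
      exact h.2.1 _ (List.getLast_mem hne) w hw
    · rw [List.concat_eq_append] at hcat
      rw [hcat, stemD_concat]
      have hLT : Tm.TermLT s (ρ.getLast hne) := by
        refine hchain.2.2 s ?_ (ρ.getLast hne) (by simp)
        rw [hcat, List.getLast?_concat]
        rfl
      have hs_mem : s ∈ ρ := hsub s (by rw [hcat]; simp)
      have := Tm.termLT_mem (h.1 s hs_mem) (h.1 _ (List.getLast_mem hne)) hLT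
        s.maxV (maxV_mem s) w hw
      omega
  · conv_lhs => rw [← hsplit]
    exact stemD_concat N _ _

theorem stemVals_congr {K : ℕ} {e b : ℕ → A} (hr : Red I K e b) {ρ : List (Tm F)}
    (hbd : ∀ t ∈ ρ, ∀ w ∈ t.varList, w < K) : stemVals I e ρ = stemVals I b ρ :=
  List.map_congr_left fun t ht =>
    Tm.realize_congr I fun w hw => red_agree I hr w (hbd t ht w hw)

theorem stem_maxV_chain {N : ℕ} : ∀ {ρ : List (Tm F)}, StemOK N ρ →
    (ρ.map Tm.maxV).Chain' (· < ·)
  | [], _ => by simp [List.Chain']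
  | [t], _ => by simp [List.Chain']
  | t0 :: t1 :: ρ'', hok => by
      rw [List.map_cons, List.map_cons, List.Chain', List.isChain_cons_cons]
      constructor
      · exact Tm.termLT_mem (hok.1 t0 (by simp)) (hok.1 t1 (by simp))
          ((List.isChain_cons_cons.1 hok.2.2).1) _ (maxV_mem t0) _ (maxV_mem t1)
      · have hok' : StemOK N (t1 :: ρ'') :=
          ⟨fun s hs => hok.1 s (by simp [hs]), fun s hs => hok.2.1 s (by simp [hs]),
            (List.isChain_cons.1 hok.2.2).2⟩
        have := stem_maxV_chain hok'
        rw [List.map_cons] at this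
        exact this

theorem stemVals_length (b : ℕ → A) (ρ : List (Tm F)) :
    (stemVals I b ρ).length = ρ.length := List.length_map _

theorem stemVals_ofFn_get (b : ℕ → A) {q : ℕ} (τ : ℕ → Tm F)
    (j : Fin (stemVals I b (List.ofFn fun i : Fin q => τ (i : ℕ))).length) :
    (stemVals I b (List.ofFn fun i : Fin q => τ (i : ℕ))).get j =
      (τ (j : ℕ)).realize I b := by
  rcases j with ⟨j, hj⟩
  rw [List.get_eq_getElem]
  have hq : j < q := by
    rw [stemVals_length] at hj
    simpa using hj
  simp [stemVals, List.getElem_map, List.getElem_ofFn]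

theorem exists_stem_list [IsEmpty (F 1)] [Finite (Σ n, F n)] (N k : ℕ) :
    ∃ L : List (List (Tm F)), ∀ ρ : List (Tm F), StemOK N ρ → stemD N ρ = k → ρ ∈ L := by
  have hfin := finite_bddLists (finite_orderly_bdd (F := F) k) k
  refine ⟨hfin.toFinset.toList, ?_⟩
  intro ρ hok hD
  rw [Finset.mem_toList, Set.Finite.mem_toFinset]
  have hbd : ∀ t ∈ ρ, ∀ w ∈ t.varList, w < k := by
    intro t ht w hw
    have := stem_vars_lt hok t ht w hw
    omega
  refine ⟨fun t ht => ⟨hok.1 t ht, hbd t ht⟩, ?_⟩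
  have hchain : (ρ.map Tm.maxV).Chain' (· < ·) := stem_maxV_chain hok
  have hlen : (ρ.map Tm.maxV).length ≤ k := by
    refine length_le_of_pairwise_lt (List.isChain_iff_pairwise.1 hchain) ?_
    intro x hx
    obtain ⟨t, ht, rfl⟩ := List.mem_map.1 hx
    exact hbd t ht _ (maxV_mem t)
  rwa [List.length_map] at hlen

theorem stem_get_append {v s : List A} {c : ℕ → A}
    (h1 : ∀ i : Fin v.length, c i = v.get i)
    (h2 : ∀ j : Fin s.length, c (v.length + j) = s.get j) :
    ∀ i : Fin (v ++ s).length, c i = (v ++ s).get i := by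
  intro i
  have hi : (i : ℕ) < v.length + s.length := by
    have := i.isLt
    simpa using this
  rw [List.get_eq_getElem]
  rcases Nat.lt_or_ge (i : ℕ) v.length with hlt | hge
  · rw [List.getElem_append_left hlt]
    have := h1 ⟨i, hlt⟩
    rw [this, List.get_eq_getElem]
  · rw [List.getElem_append_right hge]
    have hj : (i : ℕ) - v.length < s.length := by omega
    have h3 := h2 ⟨(i : ℕ) - v.length, hj⟩
    rw [List.get_eq_getElem] at h3
    have harith : v.length + ((i : ℕ) - v.length) = (i : ℕ) := by omega
    rw [harith] at h3
    exact h3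

theorem core_list [IsEmpty (F 1)] [Finite (Σ n, F n)] (hRA : RamseyAlg I)
    (v : List A) (k : ℕ) :
    ∀ (L : List (List (Tm F))) (cur : ℕ → A),
    ∃ nxt, Red I k nxt cur ∧ ∀ ρ ∈ L,
      ((∃ h', Red I k h' cur ∧ Accepts I U (v ++ stemVals I cur ρ) k h') ∨
       CRej I U (v ++ stemVals I cur ρ) k nxt) := by
  intro L
  induction L with
  | nil => exact fun cur => ⟨cur, red_refl I k cur, fun ρ hρ => absurd hρ List.not_mem_nil⟩
  | cons ρ0 L' ih =>
    intro cur
    obtain ⟨nxt', h1, h2⟩ := ih cur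
    rcases core I U hRA (v ++ stemVals I cur ρ0) k nxt' with ⟨h', hred', hacc⟩ | ⟨h', hred', hcr⟩
    · refine ⟨h', red_trans I hred' h1, ?_⟩
      intro ρ hρ
      rcases List.mem_cons.1 hρ with rfl | hρ'
      · exact Or.inl ⟨h', red_trans I hred' h1, hacc⟩
      · rcases h2 ρ hρ' with hA | hC
        · exact Or.inl hA
        · exact Or.inr (crej_transfer I U hC hred')
    · refine ⟨h', red_trans I hred' h1, ?_⟩
      intro ρ hρ
      rcases List.mem_cons.1 hρ with rfl | hρ'
      · exact Or.inr hcr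
      · rcases h2 ρ hρ' with hA | hC
        · exact Or.inl hA
        · exact Or.inr (crej_transfer I U hC hred')

theorem master [IsEmpty (F 1)] [Finite (Σ n, F n)] (hRA : RamseyAlg I)
    (hU : ∀ c ∈ U, ∃ m, ∀ e, Red I m e c → e ∈ U)
    (v : List A) (N : ℕ) (g : ℕ → A) :
    ∃ h, Red I N h g ∧ (ExtS I v N h ⊆ U ∨ ExtS I v N h ∩ U = ∅) := by
  obtain ⟨e0, he0, hdec⟩ := exists_decide I U v N g
  rcases hdec with hAcc | hRej
  · exact ⟨e0, he0, Or.inl hAcc⟩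
  have hstep : ∀ k cur, ∃ nxt, Red I k nxt cur ∧ ((k < N → nxt = cur) ∧
      ∀ ρ : List (Tm F), StemOK N ρ → stemD N ρ = k →
        ((∃ h', Red I k h' cur ∧ Accepts I U (v ++ stemVals I cur ρ) k h') ∨
         CRej I U (v ++ stemVals I cur ρ) k nxt)) := by
    intro k cur
    rcases Nat.lt_or_ge k N with hk | hk
    · refine ⟨cur, red_refl I k cur, fun _ => rfl, ?_⟩
      intro ρ hok hD
      have := stemD_ge hok
      omega
    · obtain ⟨L, hL⟩ := exists_stem_list (F := F) N k
      obtain ⟨nxt, h1, h2⟩ := core_list I U hRA v k L cur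
      exact ⟨nxt, h1, fun hlt => absurd hlt (Nat.not_lt.2 hk),
        fun ρ hok hD => h2 ρ (hL ρ hok hD)⟩
  obtain ⟨d, dl, hd0, hdred, hdst, hdl⟩ := fusion I e0 _ hstep
  have hchain : ∀ j k', j ≤ k' → Red I j (d k') (d j) := by
    intro j k' hjk
    induction k', hjk using Nat.le_induction with
    | base => exact red_refl I j (d j)
    | succ m hm ih => exact red_trans I (red_weaken I (by omega) (hdred m)) ih
  have hdN : ∀ k, k ≤ N → d k = e0 := by
    intro k hk
    induction k with
    | zero => exact hd0
    | succ m ih =>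
      rw [(hdst m).1 (by omega)]
      exact ih (by omega)
  have hdlN : Red I N dl e0 := by
    have h := hdl N
    rwa [hdN N (le_refl N)] at h
  have FACT : ∀ (n : ℕ) (ρ : List (Tm F)), ρ.length = n → StemOK N ρ →
      Rejects I U (v ++ stemVals I dl ρ) (stemD N ρ) (d (stemD N ρ)) := by
    intro n
    induction n with
    | zero =>
      intro ρ hlen hok
      have hnil : ρ = [] := List.length_eq_zero_iff.1 hlen
      subst hnil
      show Rejects I U (v ++ []) N (d N)
      rw [List.append_nil, hdN N (le_refl N)]
      exact hRej
    | succ n ih =>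
      intro ρ hlen hok
      have hne : ρ ≠ [] := by
        intro h
        rw [h] at hlen
        simp at hlen
      obtain ⟨hokDL, hgeL, hDeq⟩ := stemOK_dropLast hok hne
      have hK'le : stemD N ρ.dropLast ≤ (ρ.getLast hne).maxV :=
        hgeL (ρ.getLast hne).maxV (maxV_mem _)
      have hbd' : ∀ s ∈ ρ.dropLast, ∀ w ∈ s.varList, w < stemD N ρ.dropLast :=
        fun s hs => stem_vars_lt hokDL s hs
      have hvals' : stemVals I dl ρ.dropLast = stemVals I (d (stemD N ρ.dropLast)) ρ.dropLast :=
        stemVals_congr I (hdl (stemD N ρ.dropLast)) hbd'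
      have hIH : Rejects I U (v ++ stemVals I dl ρ.dropLast) (stemD N ρ.dropLast)
          (d (stemD N ρ.dropLast)) := by
        refine ih ρ.dropLast ?_ hokDL
        rw [List.length_dropLast, hlen]
        omega
      rcases (hdst (stemD N ρ.dropLast)).2 ρ.dropLast hokDL rfl with ⟨h', hred', hacc⟩ | hcr
      · exfalso
        rw [← hvals'] at hacc
        exact hIH h' hred' hacc
      · rw [← hvals'] at hcr
        have hred2 : Red I (stemD N ρ.dropLast) (d (stemD N ρ)) (d (stemD N ρ.dropLast + 1)) := by
          refine red_weaken I (by omega) (hchain (stemD N ρ.dropLast + 1) (stemD N ρ) ?_)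
          omega
        have hcr2 := crej_transfer I U hcr hred2
        have hrej := hcr2 (ρ.getLast hne) (hok.1 _ (List.getLast_mem hne)) hgeL
        have hval_t : (ρ.getLast hne).realize I (d (stemD N ρ)) = (ρ.getLast hne).realize I dl := by
          refine Tm.realize_congr I ?_
          intro w hw
          have hwlt : w < stemD N ρ := stem_vars_lt hok _ (List.getLast_mem hne) w hw
          exact (red_agree I (hdl (stemD N ρ)) w hwlt).symm
        rw [hval_t] at hrej
        have hlist : stemVals I dl ρ.dropLast ++ [(ρ.getLast hne).realize I dl] =
            stemVals I dl ρ := by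
          conv_rhs => rw [← List.dropLast_append_getLast hne]
          show _ = (ρ.dropLast ++ [ρ.getLast hne]).map _
          rw [List.map_append]
          rfl
        rw [List.append_assoc, hlist] at hrej
        rw [hDeq] at hrej ⊢
        exact hrej
  refine ⟨dl, red_trans I hdlN he0, Or.inr ?_⟩
  rw [Set.eq_empty_iff_forall_notMem]
  rintro c ⟨hcE, hcU⟩
  obtain ⟨hstem, τ, hτa, hτge, hτr⟩ := hcE
  obtain ⟨m0, hm0⟩ := hU c hcU
  obtain ⟨q, hm'eq⟩ : ∃ q, max m0 v.length = v.length + q :=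
    ⟨max m0 v.length - v.length, by omega⟩
  have hm' : ∀ e, Red I (v.length + q) e c → e ∈ U := by
    intro e he
    rw [← hm'eq] at he
    exact hm0 e (red_weaken I (le_max_left _ _) he)
  have hρmem : ∀ s ∈ List.ofFn (fun j : Fin q => τ j), ∃ j : Fin q, s = τ (j : ℕ) := by
    intro s hs
    rw [List.mem_ofFn] at hs
    obtain ⟨j, hj⟩ := hs
    exact ⟨j, hj.symm⟩
  have hok : StemOK N (List.ofFn (fun j : Fin q => τ j)) := by
    refine ⟨?_, ?_, ?_⟩
    · intro s hs
      obtain ⟨j, rfl⟩ := hρmem s hs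
      exact hτa.1 j
    · intro s hs
      obtain ⟨j, rfl⟩ := hρmem s hs
      exact hτge j
    · refine List.Pairwise.isChain ?_
      rw [List.pairwise_ofFn]
      intro i j hij
      exact Tm.termLT_of_mem (fun x hx y hy => adm_mem_lt hτa hij x hx y hy)
  have hgeK : ∀ l, ∀ w ∈ (τ (q + l)).varList,
      stemD N (List.ofFn (fun j : Fin q => τ (j : ℕ))) ≤ w := by
    intro l w hw
    cases q with
    | zero =>
      rw [List.ofFn_zero, stemD_nil]
      exact hτge (0 + l) w hw
    | succ p =>
      have hD : stemD N (List.ofFn (fun j : Fin (p+1) => τ (j : ℕ))) = (τ p).maxV + 1 := by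
        rw [List.ofFn_succ', List.concat_eq_append, stemD_concat]
        simp
      rw [hD]
      have := adm_mem_lt hτa (show p < p + 1 + l by omega) _ (maxV_mem (τ p)) w hw
      omega
  have hρlen : (List.ofFn fun j : Fin q => τ (j : ℕ)).length = q := by simp
  have hb''red : Red I (stemD N (List.ofFn fun j : Fin q => τ (j : ℕ)))
      (fun i => if i < stemD N (List.ofFn fun j : Fin q => τ (j : ℕ)) then dl i
        else c (v.length + q + (i - stemD N (List.ofFn fun j : Fin q => τ (j : ℕ))))) dl := by
    refine ⟨fun i => if i < stemD N (List.ofFn fun j : Fin q => τ (j : ℕ)) then .var i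
        else τ (q + (i - stemD N (List.ofFn fun j : Fin q => τ (j : ℕ)))), ?_,
      fun i hi => by simp [hi], ?_⟩
    · exact glue_adm (adm_tail hτa q) _ (fun l w hw => hgeK l w hw)
    · intro i
      by_cases hi : i < stemD N (List.ofFn fun j : Fin q => τ (j : ℕ))
      · simp [hi, Tm.realize]
      · simp only [hi, if_neg, not_false_iff]
        have harith : v.length + q + (i - stemD N (List.ofFn fun j : Fin q => τ (j : ℕ))) =
            v.length + (q + (i - stemD N (List.ofFn fun j : Fin q => τ (j : ℕ)))) := by omega
        rw [harith]
        exact hτr (q + (i - stemD N (List.ofFn fun j : Fin q => τ (j : ℕ))))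
  have hRejdl : Rejects I U (v ++ stemVals I dl (List.ofFn fun j : Fin q => τ (j : ℕ)))
      (stemD N (List.ofFn fun j : Fin q => τ (j : ℕ))) dl :=
    rejects_mono I U (hdl _) (FACT _ _ rfl hok)
  refine hRejdl _ hb''red ?_
  intro e he
  have he2 : e ∈ ExtS I (v ++ stemVals I dl (List.ofFn fun j : Fin q => τ (j : ℕ)))
      (v.length + q) c := by
    refine ext_shift I (P := stemD N (List.ofFn fun j : Fin q => τ (j : ℕ)))
      (Q := v.length + q) ?_ he
    intro l
    have h5 : ¬ stemD N (List.ofFn fun j : Fin q => τ (j : ℕ)) + l <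
        stemD N (List.ofFn fun j : Fin q => τ (j : ℕ)) := by omega
    simp only [h5, if_neg, not_false_iff]
    congr 1
    omega
  have hvlen : (v ++ stemVals I dl (List.ofFn fun j : Fin q => τ (j : ℕ))).length =
      v.length + q := by
    rw [List.length_append, stemVals_length, hρlen]
  have hvg : ∀ i : Fin (v ++ stemVals I dl (List.ofFn fun j : Fin q => τ (j : ℕ))).length,
      c i = (v ++ stemVals I dl (List.ofFn fun j : Fin q => τ (j : ℕ))).get i := by
    refine stem_get_append hstem ?_
    intro j
    rw [stemVals_ofFn_get]
    exact hτr j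
  exact hm' e (ext_sub_approx I hvlen hvg he2)

end Master


section Topology

open Tm

variable {F : ℕ → Type u} {A : Type v} [IsEmpty (F 0)]
variable (I : ∀ n, F n → (Fin n → A) → A)

theorem mem_approx_iff {N : ℕ} {b' b : ℕ → A} : b' ∈ Approx I N b ↔ Red I N b' b :=
  (red_iff_approx I).symm

theorem isOpen_approx (n : ℕ) (a : ℕ → A) : @IsOpen _ (natTop I) (Approx I n a) := by
  letI := natTop I
  exact TopologicalSpace.isOpen_generateFrom_of_mem ⟨n, a, rfl⟩

theorem open_locally {V : Set (ℕ → A)} (hV : @IsOpen _ (natTop I) V) :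
    ∀ c ∈ V, ∃ m, ∀ e, Red I m e c → e ∈ V := by
  have hV' : TopologicalSpace.GenerateOpen {S | ∃ n a, S = Approx I n a} V := hV
  clear hV
  induction hV' with
  | basic S hS =>
    obtain ⟨n, a, rfl⟩ := hS
    intro c hc
    refine ⟨n, fun e he => ?_⟩
    rw [mem_approx_iff] at hc ⊢
    exact red_trans I he hc
  | univ => exact fun c _ => ⟨0, fun e _ => trivial⟩
  | inter V1 V2 h1 h2 ih1 ih2 =>
    intro c hc
    obtain ⟨m1, hm1⟩ := ih1 c hc.1
    obtain ⟨m2, hm2⟩ := ih2 c hc.2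
    exact ⟨max m1 m2, fun e he =>
      ⟨hm1 e (red_weaken I (le_max_left _ _) he), hm2 e (red_weaken I (le_max_right _ _) he)⟩⟩
  | sUnion S hS ih =>
    intro c hc
    obtain ⟨V0, hV0S, hcV0⟩ := hc
    obtain ⟨m, hm⟩ := ih V0 hV0S c hcV0
    exact ⟨m, fun e he => ⟨V0, hV0S, hm e he⟩⟩

variable (U : Set (ℕ → A))

theorem approx_eq_ext {n : ℕ} {a h : ℕ → A} (hred : Red I n h a) :
    Approx I n h = ExtS I (List.ofFn fun i : Fin n => a i) n h := by
  have hlen : (List.ofFn fun i : Fin n => a i).length = n := by simp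
  have hag : ∀ i : Fin (List.ofFn fun i : Fin n => a i).length,
      h i = (List.ofFn fun i : Fin n => a i).get i := by
    intro i
    have hi : (i : ℕ) < n := by
      have := i.isLt
      simpa using this
    rw [List.get_eq_getElem]
    simp only [List.getElem_ofFn]
    exact red_agree I hred i hi
  ext c
  rw [mem_approx_iff]
  constructor
  · intro hc
    exact approx_sub_ext I hc _ hlen hag
  · intro hc
    exact ext_sub_approx I hlen hag hc

theorem open_ramsey [IsEmpty (F 1)] [Finite (Σ n, F n)] (hRA : RamseyAlg I)
    (hUopen : @IsOpen _ (natTop I) U) (n : ℕ) (a : ℕ → A) :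
    ∃ b, Red I n b a ∧ (Approx I n b ⊆ U ∨ Approx I n b ∩ U = ∅) := by
  obtain ⟨h, hred, hdich⟩ := master I U hRA (open_locally I hUopen)
    (List.ofFn fun i : Fin n => a i) n a
  refine ⟨h, hred, ?_⟩
  rw [approx_eq_ext I hred]
  exact hdich

theorem dense_open_master [IsEmpty (F 1)] [Finite (Σ n, F n)] (hRA : RamseyAlg I)
    (hUopen : @IsOpen _ (natTop I) U) (hUdense : @Dense _ (natTop I) U)
    (v : List A) (N : ℕ) (g : ℕ → A) :
    ∃ h, Red I N h g ∧ ExtS I v N h ⊆ U := by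
  obtain ⟨h, hred, hdich⟩ := master I U hRA (open_locally I hUopen) v N g
  refine ⟨h, hred, ?_⟩
  rcases hdich with hsub | hdisj
  · exact hsub
  exfalso
  -- the canonical branch gives a nonempty basic open subset of ExtS
  set c0 : ℕ → A := fun i => if h' : i < v.length then v.get ⟨i, h'⟩ else h (N + (i - v.length))
    with hc0def
  have hc0 : c0 ∈ ExtS I v N h := ext_nonempty I v N h
  have hc0stem : ∀ i : Fin (v.length), c0 i = v.get i := hc0.1
  have hsub2 : Approx I v.length c0 ⊆ ExtS I v N h := by
    intro e he
    rw [mem_approx_iff] at he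
    have he1 : e ∈ ExtS I v v.length c0 := by
      refine approx_sub_ext I he v rfl ?_
      intro i
      exact hc0stem i
    refine ext_shift I (P := v.length) (Q := N) ?_ he1
    intro l
    show c0 (v.length + l) = h (N + l)
    rw [hc0def]
    have h5 : ¬ v.length + l < v.length := by omega
    simp only [h5, dif_neg, not_false_iff]
    congr 1
    omega
  letI := natTop I
  have hne : (Approx I v.length c0).Nonempty := ⟨c0, (mem_approx_iff I).2 (red_refl I _ c0)⟩
  obtain ⟨x, hx1, hx2⟩ := dense_iff_inter_open.1 hUdense (Approx I v.length c0)
    (isOpen_approx I _ _) hne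
  have : x ∈ ExtS I v N h ∩ U := ⟨hsub2 hx1, hx2⟩
  rw [hdisj] at this
  exact this

end Topology


section Final

open Tm

variable {F : ℕ → Type u} {A : Type v} [IsEmpty (F 0)]
variable (I : ∀ n, F n → (Fin n → A) → A)

theorem meager_null [IsEmpty (F 1)] [Finite (Σ n, F n)] (hRA : RamseyAlg I)
    (Vs : ℕ → Set (ℕ → A)) (hVo : ∀ k, @IsOpen _ (natTop I) (Vs k))
    (hVd : ∀ k, @Dense _ (natTop I) (Vs k)) (n : ℕ) (a : ℕ → A) :
    ∃ b, Red I n b a ∧ ∀ c, Red I n c b → ∀ k, c ∈ Vs k := by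
  have hdlist : ∀ (k : ℕ) (L : List (List (Tm F) × ℕ)) (cur : ℕ → A),
      ∃ nxt, Red I k nxt cur ∧ ∀ p ∈ L,
        ExtS I ((List.ofFn fun i : Fin n => a i) ++ stemVals I cur p.1) k nxt ⊆ Vs p.2 := by
    intro k L
    induction L with
    | nil => exact fun cur => ⟨cur, red_refl I k cur, fun p hp => absurd hp List.not_mem_nil⟩
    | cons p0 L' ih =>
      intro cur
      obtain ⟨nxt', h1, h2⟩ := ih cur
      obtain ⟨h', hred', hsub⟩ := dense_open_master I (Vs p0.2) hRA (hVo p0.2) (hVd p0.2)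
        ((List.ofFn fun i : Fin n => a i) ++ stemVals I cur p0.1) k nxt'
      refine ⟨h', red_trans I hred' h1, ?_⟩
      intro p hp
      rcases List.mem_cons.1 hp with rfl | hp'
      · exact hsub
      · exact fun c hc => h2 p hp' (ext_mono I hred' hc)
  have hstep : ∀ k cur, ∃ nxt, Red I k nxt cur ∧ ((k < n → nxt = cur) ∧
      ∀ ρ : List (Tm F), StemOK n ρ → stemD n ρ = k → ∀ j < k,
        ExtS I ((List.ofFn fun i : Fin n => a i) ++ stemVals I cur ρ) k nxt ⊆ Vs j) := by
    intro k cur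
    rcases Nat.lt_or_ge k n with hk | hk
    · refine ⟨cur, red_refl I k cur, fun _ => rfl, ?_⟩
      intro ρ hok hD
      have := stemD_ge hok
      omega
    · obtain ⟨L0, hL0⟩ := exists_stem_list (F := F) n k
      obtain ⟨nxt, h1, h2⟩ := hdlist k (L0.flatMap fun ρ => (List.range k).map fun j => (ρ, j)) cur
      refine ⟨nxt, h1, fun hlt => absurd hlt (Nat.not_lt.2 hk), ?_⟩
      intro ρ hok hD j hj
      refine h2 (ρ, j) ?_
      refine List.mem_flatMap_of_mem (hL0 ρ hok hD) ?_
      exact List.mem_map.2 ⟨j, List.mem_range.2 hj, rfl⟩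
  obtain ⟨d, dl, hd0, hdred, hdst, hdl⟩ := fusion I a _ hstep
  have hdn : ∀ k, k ≤ n → d k = a := by
    intro k hk
    induction k with
    | zero => exact hd0
    | succ m ih =>
      rw [(hdst m).1 (by omega)]
      exact ih (by omega)
  have hdln : Red I n dl a := by
    have h := hdl n
    rwa [hdn n (le_refl n)] at h
  refine ⟨dl, hdln, ?_⟩
  intro c hc k
  have hcE : c ∈ ExtS I (List.ofFn fun i : Fin n => a i) n dl := by
    refine approx_sub_ext I hc _ (by simp) ?_
    intro i
    have hi : (i : ℕ) < n := by
      have := i.isLt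
      simpa using this
    rw [List.get_eq_getElem]
    simp only [List.getElem_ofFn]
    exact red_agree I hdln i hi
  obtain ⟨hstem, τ, hτa, hτge, hτr⟩ := hcE
  have hD : stemD n (List.ofFn fun j : Fin (k+1) => τ (j : ℕ)) = (τ k).maxV + 1 := by
    rw [List.ofFn_succ', List.concat_eq_append, stemD_concat]
    simp
  have hρmem : ∀ s ∈ List.ofFn (fun j : Fin (k+1) => τ (j : ℕ)), ∃ j : Fin (k+1), s = τ (j : ℕ) := by
    intro s hs
    rw [List.mem_ofFn] at hs
    obtain ⟨j, hj⟩ := hs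
    exact ⟨j, hj.symm⟩
  have hok : StemOK n (List.ofFn fun j : Fin (k+1) => τ (j : ℕ)) := by
    refine ⟨?_, ?_, ?_⟩
    · intro s hs
      obtain ⟨j, rfl⟩ := hρmem s hs
      exact hτa.1 j
    · intro s hs
      obtain ⟨j, rfl⟩ := hρmem s hs
      exact hτge j
    · refine List.Pairwise.isChain ?_
      rw [List.pairwise_ofFn]
      intro i j hij
      exact Tm.termLT_of_mem (fun x hx y hy => adm_mem_lt hτa hij x hx y hy)
  have hKgt : k < stemD n (List.ofFn fun j : Fin (k+1) => τ (j : ℕ)) := by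
    rw [hD]
    have := adm_le_mem hτa k _ (maxV_mem (τ k))
    omega
  have hst := (hdst (stemD n (List.ofFn fun j : Fin (k+1) => τ (j : ℕ)))).2 _ hok rfl k hKgt
  have hbd : ∀ s ∈ List.ofFn (fun j : Fin (k+1) => τ (j : ℕ)), ∀ w ∈ s.varList,
      w < stemD n (List.ofFn fun j : Fin (k+1) => τ (j : ℕ)) := fun s hs => stem_vars_lt hok s hs
  have hvals : stemVals I (d (stemD n (List.ofFn fun j : Fin (k+1) => τ (j : ℕ))))
      (List.ofFn fun j : Fin (k+1) => τ (j : ℕ)) =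
      stemVals I dl (List.ofFn fun j : Fin (k+1) => τ (j : ℕ)) :=
    (stemVals_congr I (hdl _) hbd).symm
  rw [hvals] at hst
  have hgeK : ∀ l, ∀ w ∈ (τ (k + 1 + l)).varList,
      stemD n (List.ofFn fun j : Fin (k+1) => τ (j : ℕ)) ≤ w := by
    intro l w hw
    rw [hD]
    have := adm_mem_lt hτa (show k < k + 1 + l by omega) _ (maxV_mem (τ k)) w hw
    omega
  have hmem : c ∈ ExtS I ((List.ofFn fun i : Fin n => a i) ++
      stemVals I dl (List.ofFn fun j : Fin (k+1) => τ (j : ℕ)))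
      (stemD n (List.ofFn fun j : Fin (k+1) => τ (j : ℕ))) dl := by
    refine ⟨?_, fun l => τ (k + 1 + l), adm_tail hτa (k+1), hgeK, ?_⟩
    · refine stem_get_append hstem ?_
      intro j
      rw [stemVals_ofFn_get]
      exact hτr j
    · intro l
      have h7 := hτr (k + 1 + l)
      have hlen7 : (List.ofFn fun i : Fin n => a i).length = n := by simp
      rw [hlen7] at h7
      have harith : ((List.ofFn fun i : Fin n => a i) ++
          stemVals I dl (List.ofFn fun j : Fin (k+1) => τ (j : ℕ))).length + l =
          n + (k + 1 + l) := by
        rw [List.length_append, hlen7, stemVals_length]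
        simp
        omega
      rw [harith]
      exact h7
  refine hst (ext_mono I ?_ hmem)
  exact red_weaken I (by omega) (hdl (stemD n (List.ofFn fun j : Fin (k+1) => τ (j : ℕ)) + 1))

theorem backward_dir [IsEmpty (F 1)] [Finite (Σ n, F n)] (hRA : RamseyAlg I)
    (X : Set (ℕ → A)) (hX : HasBaireProperty I X) : RamseySet I X := by
  letI := natTop I
  obtain ⟨V, hVopen, hVmeag⟩ := hX
  intro n a
  have hres : (symmDiff X V)ᶜ ∈ residual (ℕ → A) := hVmeag
  rw [mem_residual_iff] at hres
  obtain ⟨S, hSo, hSd, hScnt, hSsub⟩ := hres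
  have hVsex : ∃ Vs : ℕ → Set (ℕ → A), (∀ k, IsOpen (Vs k)) ∧ (∀ k, Dense (Vs k)) ∧
      ∀ c, (∀ k, c ∈ Vs k) → c ∉ symmDiff X V := by
    rcases Set.eq_empty_or_nonempty S with rfl | hSne
    · refine ⟨fun _ => Set.univ, fun _ => isOpen_univ, fun _ => dense_univ, ?_⟩
      intro c _
      have h1 : c ∈ ⋂₀ (∅ : Set (Set (ℕ → A))) := by simp
      have h2 := hSsub h1
      exact h2
    · obtain ⟨f, hf⟩ := hScnt.exists_eq_range hSne
      refine ⟨f, ?_, ?_, ?_⟩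
      · intro k
        exact hSo _ (by rw [hf]; exact ⟨k, rfl⟩)
      · intro k
        exact hSd _ (by rw [hf]; exact ⟨k, rfl⟩)
      · intro c hc
        have h1 : c ∈ ⋂₀ S := by
          intro t ht
          rw [hf] at ht
          obtain ⟨k, rfl⟩ := ht
          exact hc k
        have h2 := hSsub h1
        exact h2
  obtain ⟨Vs, hVso, hVsd, hVsmain⟩ := hVsex
  obtain ⟨b, hbred, hb⟩ := meager_null I hRA Vs hVso hVsd n a
  obtain ⟨b', hb'red, hdich⟩ := open_ramsey I V hRA hVopen n b
  refine ⟨b', (mem_approx_iff I).2 (red_trans I hb'red hbred), ?_⟩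
  have hnodiff : ∀ c ∈ Approx I n b', c ∉ symmDiff X V := by
    intro c hcmem
    exact hVsmain c (hb c (red_trans I ((mem_approx_iff I).1 hcmem) hb'red))
  rcases hdich with hsub | hdisj
  · left
    intro c hcmem
    have hcV := hsub hcmem
    by_contra hcX
    exact hnodiff c hcmem (Set.mem_symmDiff.2 (Or.inr ⟨hcV, hcX⟩))
  · right
    rw [Set.eq_empty_iff_forall_notMem]
    rintro c ⟨hcmem, hcX⟩
    have hcnV : c ∉ V := by
      intro hcV
      have h3 : c ∈ Approx I n b' ∩ V := ⟨hcmem, hcV⟩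
      rw [hdisj] at h3
      exact h3
    exact hnodiff c hcmem (Set.mem_symmDiff.2 (Or.inl ⟨hcX, hcnV⟩))

theorem forward_dir (h : ∀ X : Set (ℕ → A), HasBaireProperty I X → RamseySet I X) :
    RamseyAlg I := by
  intro a X
  have hopen : @IsOpen _ (natTop I) {b : ℕ → A | b 0 ∈ X} := by
    letI := natTop I
    have hEq : {b : ℕ → A | b 0 ∈ X} =
        ⋃₀ {S | ∃ b ∈ {b : ℕ → A | b 0 ∈ X}, S = Approx I 1 b} := by
      ext c
      constructor
      · intro hc
        exact ⟨Approx I 1 c, ⟨c, hc, rfl⟩, (mem_approx_iff I).2 (red_refl I 1 c)⟩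
      · rintro ⟨S, ⟨b, hb, rfl⟩, hcS⟩
        have h0 := red_agree I ((mem_approx_iff I).1 hcS) 0 (by omega)
        show c 0 ∈ X
        rw [h0]
        exact hb
    rw [hEq]
    exact isOpen_sUnion (by rintro S ⟨b, _, rfl⟩; exact isOpen_approx I 1 b)
  have hBaire : HasBaireProperty I {b : ℕ → A | b 0 ∈ X} := by
    refine ⟨{b : ℕ → A | b 0 ∈ X}, hopen, ?_⟩
    letI := natTop I
    rw [symmDiff_self, Set.bot_eq_empty]
    exact IsMeagre.empty
  obtain ⟨b, hbmem, hdich⟩ := h {b : ℕ → A | b 0 ∈ X} hBaire 0 a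
  refine ⟨b, hbmem.1, ?_⟩
  have key : ∀ x ∈ FR I b, ∃ c ∈ Approx I 0 b, c 0 = x := by
    rintro x ⟨t, ht, rfl⟩
    refine ⟨fun i => if i = 0 then t.realize I b else b (t.maxV + i), ?_, by simp⟩
    rw [mem_approx_iff]
    refine ⟨fun i => if i = 0 then t else .var (t.maxV + i), ⟨?_, ?_⟩, fun i hi => by omega, ?_⟩
    · intro i
      by_cases hi : i = 0
      · simpa [hi] using ht
      · simp [hi, Tm.Orderly, Tm.varList, List.Chain']
    · intro i
      refine Tm.termLT_of_mem ?_
      intro x hx y hy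
      have h8 : ¬ (i + 1 = 0) := by omega
      by_cases hi : i = 0
      · subst hi
        simp only [if_pos rfl] at hx
        simp only [h8, if_neg, not_false_iff, Tm.varList, List.mem_singleton] at hy
        have := Tm.le_maxV ht hx
        omega
      · simp only [hi, h8, if_neg, not_false_iff, Tm.varList, List.mem_singleton] at hx hy
        omega
    · intro i
      by_cases hi : i = 0 <;> simp [hi, Tm.realize]
  rcases hdich with hsub | hdisj
  · left
    rintro x hx
    obtain ⟨c, hcmem, hc0⟩ := key x hx
    have := hsub hcmem
    rw [← hc0]
    exact this
  · right
    rw [Set.eq_empty_iff_forall_notMem]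
    rintro x ⟨hxFR, hxX⟩
    obtain ⟨c, hcmem, hc0⟩ := key x hxFR
    have h9 : c ∈ Approx I 0 b ∩ {b : ℕ → A | b 0 ∈ X} :=
      ⟨hcmem, by show c 0 ∈ X; rw [hc0]; exact hxX⟩
    rw [hdisj] at h9
    exact h9

end Final


/-- For a purely functional language with no nullary and no
unary function symbols and finitely many function symbols in total, the
preorder with approximations `(ᵂA, ≤)` with its natural topology is a Ramsey
space (every subset with the property of Baire is Ramsey) iff `(A, I)` is a
Ramsey algebra. -/
theorem ramsey_space_iff_ramsey_algebra {F : ℕ → Type u} {A : Type v}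
    [IsEmpty (F 0)] [IsEmpty (F 1)] [Finite (Σ n, F n)]
    (I : ∀ n, F n → (Fin n → A) → A) :
    (∀ X : Set (ℕ → A), HasBaireProperty I X → RamseySet I X) ↔ RamseyAlg I := by
  constructor
  · exact forward_dir I
  · intro hRA X hX
    exact backward_dir I hRA X hX
end

section
/- Every semigroup is a Ramsey algebra: if (S, ·) is a semigroup, regarded as a structure for the language with a single binary function symbol interpreted as the multiplication ·, then for every sequence a : ℕ → S and every X ⊆ S there exists a reduction b ≤ a such that FR(b) ⊆ X or FR(b) ∩ X = ∅. -/
open Function Set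

universe u v w

attribute [local instance] Ultrafilter.mul Ultrafilter.semigroup

namespace SemigroupRamsey
open Filter Hindman

theorem exists_idem_all {M} [Semigroup M] (a : Stream' M) :
    ∃ U : Ultrafilter M, U * U = U ∧ ∀ n, FP (a.drop n) ∈ U := by
  let S : Set (Ultrafilter M) := ⋂ n, { U | ∀ᶠ m in U, m ∈ FP (a.drop n) }
  have h := exists_idempotent_in_compact_subsemigroup ?_ S ?_ ?_ ?_
  · rcases h with ⟨U, hU, U_idem⟩
    refine ⟨U, U_idem, fun n => ?_⟩
    exact Set.mem_iInter.mp hU n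
  · exact Ultrafilter.continuous_mul_left
  · apply IsCompact.nonempty_iInter_of_sequence_nonempty_isCompact_isClosed
    · intro n U hU
      filter_upwards [hU]
      rw [← Stream'.drop_drop, ← Stream'.tail_eq_drop]
      exact FP.tail _
    · intro n
      exact ⟨pure _, mem_pure.mpr <| FP.head _⟩
    · exact (ultrafilter_isClosed_basic _).isCompact
    · intro n
      apply ultrafilter_isClosed_basic
  · exact IsClosed.isCompact (isClosed_iInter fun i => ultrafilter_isClosed_basic _)
  · intro U hU V hV
    rw [Set.mem_iInter] at *
    intro n
    rw [Set.mem_setOf_eq, Ultrafilter.eventually_mul]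
    filter_upwards [hU n] with m hm
    obtain ⟨n', hn⟩ := FP.mul hm
    filter_upwards [hV (n + n')] with m' hm'
    apply hn
    simpa only [Stream'.drop_drop] using hm'

variable {M : Type*} [Semigroup M]

def star' (U : Ultrafilter M) (s : Set M) : Set M :=
  s ∩ { m | ∀ᶠ m' in U, m * m' ∈ s }

theorem star'_subset (U : Ultrafilter M) (s : Set M) : star' U s ⊆ s := Set.inter_subset_left

theorem star'_mem (U : Ultrafilter M) (idem : U * U = U) {s : Set M} (hs : s ∈ U) :
    star' U s ∈ U :=
  Filter.inter_mem hs <| by rwa [← idem] at hs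

theorem star'_key (U : Ultrafilter M) (idem : U * U = U) {s : Set M} {x : M}
    (hx : x ∈ star' U s) : { m | x * m ∈ star' U s } ∈ U := by
  have h1 : { m | x * m ∈ s } ∈ U := hx.2
  have h2 : { m | ∀ᶠ m' in U, x * (m * m') ∈ s } ∈ U := by rwa [← idem] at h1
  apply Filter.mem_of_superset (Filter.inter_mem h1 h2)
  rintro m ⟨hm1, hm2⟩
  refine ⟨hm1, ?_⟩
  filter_upwards [hm2] with m' hm'
  rwa [← mul_assoc] at hm'

variable {S : Type v} [Semigroup S]

def prodL (b : ℕ → S) : ℕ → List ℕ → S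
  | i, [] => b i
  | i, j :: l => b i * prodL b j l

def listTerm : ℕ → List ℕ → Tm BinF
  | i, [] => .var i
  | i, j :: l => fapp (.var i) (listTerm j l)

theorem varList_fapp (s t : Tm BinF) : (fapp s t).varList = s.varList ++ t.varList := by
  show (List.finRange 2).flatMap _ = _
  rw [show List.finRange 2 = [0, 1] by rfl]
  simp [Tm.varList, List.flatMap]

theorem realize_fapp (b : ℕ → S) (s t : Tm BinF) :
    (fapp s t).realize (binI (· * ·)) b
      = s.realize (binI (· * ·)) b * t.realize (binI (· * ·)) b := by
  show binI (· * ·) 2 BinF.f _ = _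
  simp [binI, Tm.realize, fapp]

theorem varList_listTerm (i : ℕ) (l : List ℕ) : (listTerm i l).varList = i :: l := by
  induction l generalizing i with
  | nil => rfl
  | cons j l ih => rw [listTerm, varList_fapp, ih]; rfl

theorem realize_listTerm (b : ℕ → S) (i : ℕ) (l : List ℕ) :
    (listTerm i l).realize (binI (· * ·)) b = prodL b i l := by
  induction l generalizing i with
  | nil => rfl
  | cons j l ih => rw [listTerm, realize_fapp, ih]; rfl

theorem prodL_append (b : ℕ → S) (i j : ℕ) (l l' : List ℕ) :
    prodL b i (l ++ j :: l') = prodL b i l * prodL b j l' := by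
  induction l generalizing i with
  | nil => rfl
  | cons k l ih =>
    show prodL b i (k :: (l ++ j :: l')) = _
    rw [prodL, ih, prodL, mul_assoc]

theorem realize_decomp (b : ℕ → S) (t : Tm BinF) :
    ∃ i l, t.varList = i :: l ∧ t.realize (binI (· * ·)) b = prodL b i l := by
  induction t with
  | var i => exact ⟨i, [], rfl, rfl⟩
  | func g ts ih =>
    cases g
    obtain ⟨i0, l0, h0, e0⟩ := ih 0
    obtain ⟨i1, l1, h1, e1⟩ := ih 1
    have hrw : Tm.func BinF.f ts = fapp (ts 0) (ts 1) := by
      unfold fapp; congr; funext k; fin_cases k <;> simp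
    refine ⟨i0, l0 ++ i1 :: l1, ?_, ?_⟩
    · rw [hrw, varList_fapp, h0, h1]; rfl
    · rw [hrw, realize_fapp, e0, e1, prodL_append]

theorem prodL_shift (b : ℕ → S) (N i : ℕ) (l : List ℕ) :
    prodL (fun k => b (k + N)) i l = prodL b (i + N) (l.map (· + N)) := by
  induction l generalizing i with
  | nil => rfl
  | cons j l ih => show (fun k => b (k + N)) i * _ = _; rw [ih]; rfl

theorem fp_decomp {x : S} {c : Stream' S} (hx : x ∈ FP c) :
    ∃ i l, List.Chain (· < ·) i l ∧ x = prodL c.get i l := by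
  induction hx with
  | head' a => exact ⟨0, [], List.Chain.nil, rfl⟩
  | tail' a m h ih =>
    obtain ⟨i, l, hc, he⟩ := ih
    refine ⟨i + 1, l.map (· + 1), ?_, ?_⟩
    · exact (List.isChain_cons_map _).2 (List.IsChain.imp (fun a b h => by omega) hc)
    · rw [← prodL_shift]; exact he
  | cons' a m h ih =>
    obtain ⟨i, l, hc, he⟩ := ih
    refine ⟨0, (i + 1) :: l.map (· + 1), ?_, ?_⟩
    · exact List.Chain.cons (by omega) ((List.isChain_cons_map _).2 (List.IsChain.imp (fun a b h => by omega) hc))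
    · rw [prodL, ← prodL_shift, he]; rfl

theorem le_foldr_max {k : ℕ} {l : List ℕ} (h : k ∈ l) : k ≤ l.foldr max 0 := by
  induction l with
  | nil => simp at h
  | cons j l ih =>
    rcases List.mem_cons.1 h with rfl | h
    · exact le_max_left _ _
    · exact le_trans (ih h) (le_max_right _ _)

theorem main_aux (a : ℕ → S) (U : Ultrafilter S) (idem : U * U = U)
    (hFP : ∀ n, FP (Stream'.drop n a) ∈ U) (Y : Set S) (hY : Y ∈ U) :
    ∃ b, SeqReduction (binI (· * ·)) b a ∧ FR (binI (· * ·)) b ⊆ Y := by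
  classical
  have pick : ∀ (T : Set S) (N : ℕ), T ∈ U →
      ∃ x i l, x ∈ star' U T ∧ List.Chain (· < ·) i l ∧ (∀ k ∈ i :: l, N ≤ k) ∧
        x = prodL a i l := by
    intro T N hT
    obtain ⟨x, hx1, hx2⟩ :=
      Ultrafilter.nonempty_of_mem (Filter.inter_mem (star'_mem U idem hT) (hFP N))
    obtain ⟨i, l, hc, he⟩ := fp_decomp hx2
    have he' : x = prodL (fun k => a (k + N)) i l := he
    refine ⟨x, i + N, l.map (· + N), hx1, ?_, ?_, ?_⟩
    · exact (List.isChain_cons_map (· + N)).2 (List.IsChain.imp (fun a b h => Nat.add_lt_add_right h N) hc)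
    · intro k hk
      rcases List.mem_cons.1 hk with rfl | hk
      · omega
      · obtain ⟨k', _, rfl⟩ := List.mem_map.1 hk
        omega
    · rw [he', prodL_shift]
  choose xf If Lf hx hchain hlb hval using pick
  -- iterated stage data: (T, N) with T ∈ U
  let next : { p : Set S × ℕ // p.1 ∈ U } → { p : Set S × ℕ // p.1 ∈ U } := fun p =>
    ⟨(star' U p.1.1 ∩ { m | xf p.1.1 p.1.2 p.2 * m ∈ star' U p.1.1 },
      ((If p.1.1 p.1.2 p.2 :: Lf p.1.1 p.1.2 p.2).foldr max 0) + 1),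
     Filter.inter_mem (star'_mem U idem p.2) (star'_key U idem (hx p.1.1 p.1.2 p.2))⟩
  let st : ℕ → { p : Set S × ℕ // p.1 ∈ U } := fun n => next^[n] ⟨(Y, 0), hY⟩
  let T : ℕ → Set S := fun n => (st n).1.1
  let N : ℕ → ℕ := fun n => (st n).1.2
  let x : ℕ → S := fun n => xf (T n) (N n) (st n).2
  let I : ℕ → ℕ := fun n => If (T n) (N n) (st n).2
  let L : ℕ → List ℕ := fun n => Lf (T n) (N n) (st n).2
  have hst : ∀ n, st (n + 1) = next (st n) := fun n => Function.iterate_succ_apply' next n _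
  have hT0 : T 0 = Y := rfl
  have hTsucc : ∀ n, T (n + 1) = star' U (T n) ∩ { m | x n * m ∈ star' U (T n) } := by
    intro n; show (st (n + 1)).1.1 = _; rw [hst n]
  have hNsucc : ∀ n, N (n + 1) = ((I n :: L n).foldr max 0) + 1 := by
    intro n; show (st (n + 1)).1.2 = _; rw [hst n]
  have hTsub : ∀ n, T (n + 1) ⊆ T n := by
    intro n
    rw [hTsucc n]
    exact Set.Subset.trans Set.inter_subset_left (star'_subset U _)
  have hTmono : ∀ m n, m ≤ n → T n ⊆ T m := by
    intro m n h
    induction n with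
    | zero => rw [Nat.le_zero.1 h]
    | succ n ih =>
      rcases Nat.lt_or_ge m (n + 1) with h' | h'
      · exact Set.Subset.trans (hTsub n) (ih (Nat.lt_succ_iff.1 h'))
      · rw [le_antisymm h h']
  have hub : ∀ n, ∀ k ∈ I n :: L n, k < N (n + 1) := by
    intro n k hk
    rw [hNsucc n]
    exact Nat.lt_succ_of_le (le_foldr_max hk)
  have hNmono : ∀ m n, m ≤ n → N m ≤ N n := by
    intro m n h
    induction n with
    | zero => rw [Nat.le_zero.1 h]
    | succ n ih =>
      rcases Nat.lt_or_ge m (n + 1) with h' | h'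
      · refine le_trans (ih (Nat.lt_succ_iff.1 h')) (le_of_lt ?_)
        exact lt_of_le_of_lt (hlb (T n) (N n) (st n).2 (I n) (List.mem_cons_self)) (hub n _ (List.mem_cons_self))
      · rw [le_antisymm h h']
  -- the key homogeneity claim
  have claim : ∀ (l : List ℕ) (i : ℕ), List.Chain (· < ·) i l →
      prodL x i l ∈ star' U (T i) := by
    intro l
    induction l with
    | nil => intro i _; exact hx (T i) (N i) (st i).2
    | cons k l ih =>
      intro i hch
      rcases List.chain_cons.1 hch with ⟨hik, hch'⟩
      have hmem : prodL x k l ∈ star' U (T k) := ih k hch'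
      have : prodL x k l ∈ T (i + 1) :=
        hTmono (i + 1) k hik ((star'_subset U _) hmem)
      rw [hTsucc i] at this
      exact this.2
  refine ⟨x, ⟨fun n => listTerm (I n) (L n), ⟨?_, ?_⟩, ?_⟩, ?_⟩
  · -- orderly
    intro n
    show (listTerm (I n) (L n)).varList.Chain' (· < ·)
    rw [varList_listTerm]
    exact hchain (T n) (N n) (st n).2
  · -- TermLT
    intro n
    have hne : (listTerm (I n) (L n)).varList ≠ [] := by rw [varList_listTerm]; simp
    refine ⟨(listTerm (I n) (L n)).varList.getLast hne, I (n + 1),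
      List.getLast?_eq_getLast hne, ?_, ?_⟩
    · rw [varList_listTerm]; rfl
    · have h1 : (listTerm (I n) (L n)).varList.getLast hne ∈ I n :: L n := by
        rw [← varList_listTerm (i := I n) (l := L n)]
        exact List.getLast_mem hne
      have h2 := hub n _ h1
      have h3 : N (n + 1) ≤ I (n + 1) :=
        hlb (T (n + 1)) (N (n + 1)) (st (n + 1)).2 (I (n + 1)) (List.mem_cons_self)
      omega
  · -- realization
    intro n
    rw [realize_listTerm]
    exact hval (T n) (N n) (st n).2
  · -- FR ⊆ Y
    rintro y ⟨t, hord, rfl⟩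
    obtain ⟨i, l, hvl, he⟩ := realize_decomp x t
    have hch : List.Chain (· < ·) i l := by
      have := hord
      rw [Tm.Orderly, hvl] at this
      exact this
    rw [he]
    exact hT0 ▸ (hTmono 0 i (Nat.zero_le i) ((star'_subset U _) (claim l i hch)))

end SemigroupRamsey


/-- Every semigroup is a Ramsey algebra. -/
theorem semigroup_is_ramsey_algebra {S : Type v} [Semigroup S]
    (a : ℕ → S) (X : Set S) :
    ∃ b, SeqReduction (binI (· * ·)) b a ∧
      (FR (binI (· * ·)) b ⊆ X ∨ FR (binI (· * ·)) b ∩ X = ∅) := by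
  obtain ⟨U, idem, hFP⟩ := SemigroupRamsey.exists_idem_all (a : Stream' S)
  by_cases hX : X ∈ U
  · obtain ⟨b, hred, hsub⟩ := SemigroupRamsey.main_aux a U idem (fun n => hFP n) X hX
    exact ⟨b, hred, Or.inl hsub⟩
  · obtain ⟨b, hred, hsub⟩ := SemigroupRamsey.main_aux a U idem (fun n => hFP n) Xᶜ
      (Ultrafilter.compl_mem_iff_notMem.2 hX)
    refine ⟨b, hred, Or.inr ?_⟩
    rw [Set.eq_empty_iff_forall_notMem]
    rintro z ⟨hz1, hz2⟩
    exact hsub hz1 hz2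
end

section
/- Let L be the first-order language with a single binary function symbol f, and let 𝒜 be an orderly semigroup, i.e., an orderly L-algebra satisfying 𝒜(f (f t₁ t₂) t₃) = 𝒜(f t₁ (f t₂ t₃)) for all orderly terms t₁ < t₂ < t₃. Then 𝒜(s) = 𝒜(t) whenever s and t are orderly terms in which exactly the same variables occur. -/
open Function Set

universe u v w

section Aux

/-- Right-associated comb term on a nonempty list of variables. -/
def comb : ℕ → List ℕ → Tm BinF
  | i, [] => .var i
  | i, j :: l => fapp (.var i) (comb j l)

lemma varList_fapp (s t : Tm BinF) :
    (fapp s t).varList = s.varList ++ t.varList := by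
  show (List.finRange 2).flatMap _ = _
  simp [List.finRange, List.flatMap, fapp, Matrix.cons_val_zero, Matrix.cons_val_one]

lemma comb_varList (i : ℕ) (l : List ℕ) : (comb i l).varList = i :: l := by
  induction l generalizing i with
  | nil => rfl
  | cons j l ih => rw [comb, varList_fapp, ih]; rfl

lemma varList_ne_nil (t : Tm BinF) : t.varList ≠ [] := by
  induction t with
  | var i => simp [Tm.varList]
  | func g ts ih =>
    cases g
    have : (Tm.func BinF.f ts).varList = (ts 0).varList ++ (ts 1).varList := by
      show (List.finRange 2).flatMap _ = _
      simp [List.finRange, List.flatMap]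
    rw [this]
    simp [ih 0]

lemma orderly_iff_varList {t t' : Tm BinF} (h : t.varList = t'.varList) :
    t.Orderly ↔ t'.Orderly := by unfold Tm.Orderly; rw [h]

lemma termLT_congr {s s' t t' : Tm BinF} (hs : s.varList.getLast? = s'.varList.getLast?)
    (ht : t.varList.head? = t'.varList.head?) (h : Tm.TermLT s t) : Tm.TermLT s' t' := by
  unfold Tm.TermLT at *; rw [← hs, ← ht]; exact h

lemma termLT_comb_comb {i : ℕ} {l : List ℕ} {j : ℕ} {m : List ℕ}
    (h : (i :: l).getLast (List.cons_ne_nil i l) < j) :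
    Tm.TermLT (comb i l) (comb j m) := by
  refine ⟨(i :: l).getLast (List.cons_ne_nil i l), j, ?_, ?_, h⟩
  · rw [comb_varList]; exact List.getLast?_eq_getLast _
  · rw [comb_varList]; rfl

lemma chain_last_lt {i : ℕ} {l : List ℕ} {j : ℕ} {m : List ℕ}
    (h : List.Chain' (· < ·) ((i :: l) ++ j :: m)) :
    (i :: l).getLast (List.cons_ne_nil i l) < j := by
  have h3 := (List.isChain_append.mp h).2.2
  exact h3 _ (List.getLast?_eq_getLast _) j rfl

lemma ordTuple_pair {s t : Tm BinF} (hs : s.Orderly) (ht : t.Orderly)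
    (hlt : Tm.TermLT s t) : OrdTuple ![s, t] := by
  constructor
  · intro i; fin_cases i <;> assumption
  · intro i j hij
    fin_cases i <;> fin_cases j <;>
      first
        | exact absurd hij (by decide)
        | simpa using hlt

lemma alg_pair_congr {β : Type w} {𝒜 : Tm BinF → β} (h𝒜 : IsOrderlyAlg 𝒜)
    {s t s' t' : Tm BinF} (hs : s.Orderly) (ht : t.Orderly) (hlt : Tm.TermLT s t)
    (hs' : s'.Orderly) (ht' : t'.Orderly) (hlt' : Tm.TermLT s' t')
    (h1 : 𝒜 s = 𝒜 s') (h2 : 𝒜 t = 𝒜 t') : 𝒜 (fapp s t) = 𝒜 (fapp s' t') := by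
  apply h𝒜 2 BinF.f ![s, t] ![s', t'] (ordTuple_pair hs ht hlt)
    (ordTuple_pair hs' ht' hlt')
  intro k; fin_cases k <;> simpa

lemma orderly_fapp_elim {s t : Tm BinF} (h : (fapp s t).Orderly) :
    s.Orderly ∧ t.Orderly ∧ Tm.TermLT s t := by
  have h' : List.Chain' (· < ·) (s.varList ++ t.varList) := by
    simpa [Tm.Orderly, varList_fapp] using h
  obtain ⟨h1, h2, h3⟩ := List.isChain_append.mp h'
  refine ⟨h1, h2, s.varList.getLast (varList_ne_nil s),
    t.varList.head (varList_ne_nil t), List.getLast?_eq_getLast _,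
    List.head?_eq_head _, h3 _ (List.getLast?_eq_getLast _) _ (List.head?_eq_head _)⟩

lemma comb_orderly {i : ℕ} {l : List ℕ} (h : List.Chain' (· < ·) (i :: l)) :
    (comb i l).Orderly := by
  unfold Tm.Orderly; rw [comb_varList]; exact h

lemma var_orderly (i : ℕ) : (Tm.var i : Tm BinF).Orderly := by
  simp [Tm.Orderly, Tm.varList, List.Chain']

/-- Collapsing: `𝒜 (fapp (comb i l₁) (comb j l₂)) = 𝒜 (comb i (l₁ ++ j :: l₂))`. -/
lemma comb_collapse {β : Type w} {𝒜 : Tm BinF → β} (h𝒜 : IsOrderlyAlg 𝒜)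
    (hassoc : ∀ t₁ t₂ t₃ : Tm BinF, t₁.Orderly → t₂.Orderly → t₃.Orderly →
      Tm.TermLT t₁ t₂ → Tm.TermLT t₂ t₃ →
      𝒜 (fapp (fapp t₁ t₂) t₃) = 𝒜 (fapp t₁ (fapp t₂ t₃)))
    (l₁ : List ℕ) : ∀ (i j : ℕ) (l₂ : List ℕ),
      List.Chain' (· < ·) (i :: (l₁ ++ j :: l₂)) →
      𝒜 (fapp (comb i l₁) (comb j l₂)) = 𝒜 (comb i (l₁ ++ j :: l₂)) := by
  induction l₁ with
  | nil => intro i j l₂ h; rfl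
  | cons k l ih =>
    intro i j l₂ h
    have hchain₂ : List.Chain' (· < ·) (k :: (l ++ j :: l₂)) := h.tail
    have hik : i < k := (List.isChain_cons_cons.mp h).1
    have hsplit := List.isChain_append.mp (show List.Chain' (· < ·)
      ((k :: l) ++ j :: l₂) from hchain₂)
    have hkl : (comb k l).Orderly := comb_orderly hsplit.1
    have hord2 : (comb j l₂).Orderly := comb_orderly hsplit.2.1
    have hltvk : Tm.TermLT (Tm.var i) (comb k l) :=
      termLT_comb_comb (l := []) (m := l) hik
    have hlt23 : Tm.TermLT (comb k l) (comb j l₂) :=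
      termLT_comb_comb (chain_last_lt hchain₂)
    have step1 : 𝒜 (fapp (fapp (.var i) (comb k l)) (comb j l₂)) =
        𝒜 (fapp (.var i) (fapp (comb k l) (comb j l₂))) :=
      hassoc _ _ _ (var_orderly i) hkl hord2 hltvk hlt23
    have hheads : (fapp (comb k l) (comb j l₂)).varList.head? =
        (comb k (l ++ j :: l₂)).varList.head? := by
      rw [varList_fapp, comb_varList, comb_varList, comb_varList]; rfl
    have hinnerord : (fapp (comb k l) (comb j l₂)).Orderly := by
      unfold Tm.Orderly
      rw [varList_fapp, comb_varList, comb_varList]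
      exact hchain₂
    have step2 : 𝒜 (fapp (.var i) (fapp (comb k l) (comb j l₂))) =
        𝒜 (fapp (.var i) (comb k (l ++ j :: l₂))) := by
      apply alg_pair_congr h𝒜 (var_orderly i) hinnerord
        (termLT_congr rfl hheads.symm
          (termLT_comb_comb (l := []) (m := l ++ j :: l₂) hik))
        (var_orderly i) (comb_orderly hchain₂)
        (termLT_comb_comb (l := []) (m := l ++ j :: l₂) hik) rfl
      exact ih k j l₂ hchain₂
    exact step1.trans step2

/-- Every orderly term has the same `𝒜`-value as the comb on its variable list. -/
lemma alg_eq_comb {β : Type w} {𝒜 : Tm BinF → β} (h𝒜 : IsOrderlyAlg 𝒜)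
    (hassoc : ∀ t₁ t₂ t₃ : Tm BinF, t₁.Orderly → t₂.Orderly → t₃.Orderly →
      Tm.TermLT t₁ t₂ → Tm.TermLT t₂ t₃ →
      𝒜 (fapp (fapp t₁ t₂) t₃) = 𝒜 (fapp t₁ (fapp t₂ t₃)))
    (t : Tm BinF) : t.Orderly → ∀ i l, t.varList = i :: l → 𝒜 t = 𝒜 (comb i l) := by
  induction t with
  | var k =>
    intro _ i l h
    have : k = i ∧ l = [] := by simpa [Tm.varList] using h
    rw [this.1, this.2]; rfl
  | func g ts ih =>
    cases g
    intro hord i l h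
    have hfapp : Tm.func BinF.f ts = fapp (ts 0) (ts 1) := by
      unfold fapp; congr 1; funext k; fin_cases k <;> rfl
    rw [hfapp] at hord h ⊢
    obtain ⟨h0, h1, hlt⟩ := orderly_fapp_elim hord
    obtain ⟨a, la, hA⟩ := List.exists_cons_of_ne_nil (varList_ne_nil (ts 0))
    obtain ⟨b, lb, hB⟩ := List.exists_cons_of_ne_nil (varList_ne_nil (ts 1))
    have hIH0 := ih 0 h0 a la hA
    have hIH1 := ih 1 h1 b lb hB
    have hvl : (fapp (ts 0) (ts 1)).varList = a :: (la ++ b :: lb) := by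
      rw [varList_fapp, hA, hB]; rfl
    have hchain : List.Chain' (· < ·) (a :: (la ++ b :: lb)) := by
      have := hord; unfold Tm.Orderly at this; rwa [hvl] at this
    have step : 𝒜 (fapp (ts 0) (ts 1)) = 𝒜 (fapp (comb a la) (comb b lb)) := by
      apply alg_pair_congr h𝒜 h0 h1 hlt
      · rw [orderly_iff_varList ((comb_varList a la).trans hA.symm)]; exact h0
      · rw [orderly_iff_varList ((comb_varList b lb).trans hB.symm)]; exact h1
      · exact termLT_congr (by rw [hA, comb_varList]) (by rw [hB, comb_varList]) hlt
      · exact hIH0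
      · exact hIH1
    rw [step, comb_collapse h𝒜 hassoc la a b lb hchain]
    have hlist : i :: l = a :: (la ++ b :: lb) := by rw [← h, hvl]
    injection hlist with e1 e2
    rw [e1, e2]

end Aux

/-- In an orderly semigroup `𝒜`, `𝒜(s) = 𝒜(t)` whenever
exactly the same variables occur in the orderly terms `s` and `t`. -/
theorem orderly_semigroup_same_vars {β : Type w} (𝒜 : Tm BinF → β)
    (h𝒜 : IsOrderlyAlg 𝒜)
    (hassoc : ∀ t₁ t₂ t₃ : Tm BinF, t₁.Orderly → t₂.Orderly → t₃.Orderly →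
      Tm.TermLT t₁ t₂ → Tm.TermLT t₂ t₃ →
      𝒜 (fapp (fapp t₁ t₂) t₃) = 𝒜 (fapp t₁ (fapp t₂ t₃)))
    (s t : Tm BinF) (hs : s.Orderly) (ht : t.Orderly)
    (hvar : ∀ i, i ∈ s.varList ↔ i ∈ t.varList) :
    𝒜 s = 𝒜 t := by
  have hps : s.varList.Pairwise (· < ·) := List.isChain_iff_pairwise.mp hs
  have hpt : t.varList.Pairwise (· < ·) := List.isChain_iff_pairwise.mp ht
  have hnds : s.varList.Nodup := hps.imp ne_of_lt
  have hndt : t.varList.Nodup := hpt.imp ne_of_lt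
  have hperm : s.varList.Perm t.varList :=
    (List.perm_ext_iff_of_nodup hnds hndt).mpr hvar
  have heq : s.varList = t.varList :=
    List.Perm.eq_of_pairwise (fun a b _ _ h1 h2 => absurd (h1.trans h2) (lt_irrefl a)) hps hpt hperm
  obtain ⟨i, l, hA⟩ := List.exists_cons_of_ne_nil (varList_ne_nil s)
  rw [alg_eq_comb h𝒜 hassoc s hs i l hA,
    alg_eq_comb h𝒜 hassoc t ht i l (heq ▸ hA)]
end

section
/- Let L be a first-order language all of whose symbols are function symbols of arity ≥ 1, and let 𝒜 be an orderly L-algebra. Then there exists an L-structure 𝔄 whose underlying set is the universe ‖𝒜‖ of 𝒜 and a sequence a : ℕ → ‖𝒜‖ such that 𝒜 is the orderly L-algebra induced from 𝔄 by a, i.e., 𝒜(t) = t^𝔄[a] for every orderly term t. -/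
open Function Set

universe u v w

section MyAux

variable {F : ℕ → Type u} [IsEmpty (F 0)]

lemma myVarList_ne_nil (t : Tm F) : t.varList ≠ [] := by
  induction t with
  | var i => simp [Tm.varList]
  | @func n f ts ih =>
    cases n with
    | zero => exact (IsEmpty.false f).elim
    | succ m =>
      simp only [Tm.varList, ne_eq, List.flatMap_eq_nil_iff, not_forall]
      exact ⟨0, List.mem_finRange 0, ih 0⟩

lemma myHead_le_last {l : List ℕ} (h : l.Chain' (· < ·)) :
    ∀ x ∈ l.head?, ∀ y ∈ l.getLast?, x ≤ y := by
  unfold List.Chain' at h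
  rw [List.isChain_iff_pairwise] at h
  intro x hx y hy
  cases l with
  | nil => simp at hx
  | cons a l' =>
    simp only [List.head?_cons, Option.mem_def, Option.some.injEq] at hx
    subst hx
    rcases List.mem_cons.1 (List.mem_of_mem_getLast? hy) with rfl | hy'
    · exact le_rfl
    · exact le_of_lt ((List.pairwise_cons.1 h).1 y hy')

lemma myTermLT_iff {s t : Tm F} :
    Tm.TermLT s t ↔ ∀ x ∈ s.varList.getLast?, ∀ y ∈ t.varList.head?, x < y := by
  constructor
  · rintro ⟨i, j, hi, hj, hij⟩ x hx y hy
    rw [hi] at hx; rw [hj] at hy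
    cases hx; cases hy; exact hij
  · intro h
    obtain ⟨i, hi⟩ := Option.ne_none_iff_exists'.1
      (mt List.getLast?_eq_none_iff.1 (myVarList_ne_nil s))
    obtain ⟨j, hj⟩ := Option.ne_none_iff_exists'.1
      (mt List.head?_eq_none_iff.1 (myVarList_ne_nil t))
    exact ⟨i, j, hi, hj, h i hi j hj⟩

lemma myTermLT_trans {s t u : Tm F} (h1 : Tm.TermLT s t) (ht : t.Orderly)
    (h2 : Tm.TermLT t u) : Tm.TermLT s u := by
  rw [myTermLT_iff] at h1 h2 ⊢
  intro x hx y hy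
  obtain ⟨j, hj⟩ := Option.ne_none_iff_exists'.1
    (mt List.head?_eq_none_iff.1 (myVarList_ne_nil t))
  obtain ⟨k, hk⟩ := Option.ne_none_iff_exists'.1
    (mt List.getLast?_eq_none_iff.1 (myVarList_ne_nil t))
  exact lt_of_lt_of_le (h1 x hx j hj)
    (le_trans (myHead_le_last ht j hj k hk) (le_of_lt (h2 k hk y hy)))

lemma myOrderly_func_iff {n : ℕ} (f : F n) (ts : Fin n → Tm F) :
    (Tm.func f ts).Orderly ↔ (∀ i, (ts i).Orderly) ∧
      ∀ i : ℕ, ∀ h : i + 1 < n,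
        Tm.TermLT (ts ⟨i, Nat.lt_of_succ_lt h⟩) (ts ⟨i + 1, h⟩) := by
  have hnn : [] ∉ (List.finRange n).map fun i => (ts i).varList := by
    simp only [List.mem_map, not_exists, not_and]
    exact fun i _ h => myVarList_ne_nil (ts i) h
  have : (Tm.func f ts).Orderly ↔
      (((List.finRange n).map fun i => (ts i).varList).flatten).Chain' (· < ·) := by
    rw [Tm.Orderly]
    show ((List.finRange n).flatMap fun i => (ts i).varList).Chain' (· < ·) ↔ _
    rw [List.flatMap_def]
  rw [this]
  unfold List.Chain'
  rw [List.isChain_flatten hnn, List.isChain_map]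
  constructor
  · rintro ⟨h1, h2⟩
    refine ⟨fun i => h1 _ (List.mem_map_of_mem (List.mem_finRange i)), ?_⟩
    intro i h
    rw [List.isChain_iff_getElem] at h2
    have hlen : i + 1 < (List.finRange n).length := by
      rw [List.length_finRange]; omega
    have := h2 i hlen
    rw [List.getElem_finRange, List.getElem_finRange] at this
    exact myTermLT_iff.2 this
  · rintro ⟨h1, h2⟩
    refine ⟨?_, ?_⟩
    · intro l hl
      obtain ⟨i, -, rfl⟩ := List.mem_map.1 hl
      exact h1 i
    · rw [List.isChain_iff_getElem]
      intro i hlen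
      rw [List.length_finRange] at hlen
      rw [List.getElem_finRange, List.getElem_finRange]
      exact myTermLT_iff.1 (h2 i (by omega))

lemma myOrdTuple_iff {n : ℕ} (ts : Fin n → Tm F) :
    OrdTuple ts ↔ (∀ i, (ts i).Orderly) ∧
      ∀ i : ℕ, ∀ h : i + 1 < n,
        Tm.TermLT (ts ⟨i, Nat.lt_of_succ_lt h⟩) (ts ⟨i + 1, h⟩) := by
  constructor
  · rintro ⟨h1, h2⟩
    exact ⟨h1, fun i h => h2 _ _ (Fin.mk_lt_mk.2 (Nat.lt_succ_self i))⟩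
  · rintro ⟨h1, h2⟩
    refine ⟨h1, ?_⟩
    have key : ∀ d : ℕ, ∀ i j : Fin n, (j : ℕ) = i + d + 1 →
        Tm.TermLT (ts i) (ts j) := by
      intro d
      induction d with
      | zero =>
        intro i j hij
        have hjlt := j.isLt
        have hji : j = ⟨(i : ℕ) + 1, by omega⟩ := Fin.ext (by simpa using hij)
        rw [hji]
        simpa using h2 (i : ℕ) (by omega)
      | succ d ih =>
        intro i j hij
        have hj' : (i : ℕ) + d + 1 < n := by omega
        have h1' := ih i ⟨(i : ℕ) + d + 1, hj'⟩ rfl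
        have h2' : Tm.TermLT (ts ⟨(i : ℕ) + d + 1, hj'⟩) (ts j) := by
          have hjlt := j.isLt
          have hji : j = ⟨(i : ℕ) + d + 1 + 1, by omega⟩ := Fin.ext (by simp only [Fin.val_mk]; omega)
          rw [hji]
          simpa using h2 ((i : ℕ) + d + 1) (by omega)
        exact myTermLT_trans h1' (h1 _) h2'
    intro i j hij
    have : (j : ℕ) = (i : ℕ) + ((j : ℕ) - (i : ℕ) - 1) + 1 := by
      have := Fin.lt_def.1 hij; omega
    exact key _ i j this

lemma myOrderly_func {n : ℕ} (f : F n) (ts : Fin n → Tm F) (h : OrdTuple ts) :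
    (Tm.func f ts).Orderly :=
  (myOrderly_func_iff f ts).2 ((myOrdTuple_iff ts).1 h)

lemma myOrdTuple_of_orderly_func {n : ℕ} (f : F n) (ts : Fin n → Tm F)
    (h : (Tm.func f ts).Orderly) : OrdTuple ts :=
  (myOrdTuple_iff ts).2 ((myOrderly_func_iff f ts).1 h)

end MyAux

noncomputable def myI {F : ℕ → Type u} [IsEmpty (F 0)] {β : Type w} (𝒜 : Tm F → β) :
    ∀ n, F n → (Fin n → ↥(OAUniv 𝒜)) → ↥(OAUniv 𝒜) := fun n f x =>
  @dite _ (∃ t : Fin n → Tm F, OrdTuple t ∧ ∀ i, 𝒜 (t i) = (x i : β)) (Classical.dec _)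
    (fun h => ⟨𝒜 (.func f h.choose), _, myOrderly_func f _ h.choose_spec.1, rfl⟩)
    (fun _ => ⟨𝒜 (.var 0), _, by simp [Set.mem_setOf_eq, Tm.Orderly, Tm.varList, List.Chain', List.isChain_singleton], rfl⟩)

noncomputable def mya {F : ℕ → Type u} {β : Type w} (𝒜 : Tm F → β) :
    ℕ → ↥(OAUniv 𝒜) := fun i =>
  ⟨𝒜 (.var i), _, by simp [Set.mem_setOf_eq, Tm.Orderly, Tm.varList, List.Chain', List.isChain_singleton], rfl⟩

/-- Every orderly algebra is induced from some algebra whose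
underlying set is the universe `‖𝒜‖` of `𝒜`, by some sequence `a`. -/
theorem orderly_algebra_is_induced {F : ℕ → Type u} [IsEmpty (F 0)] {β : Type w}
    (𝒜 : Tm F → β) (h𝒜 : IsOrderlyAlg 𝒜) :
    ∃ (I : ∀ n, F n → (Fin n → ↥(OAUniv 𝒜)) → ↥(OAUniv 𝒜))
      (a : ℕ → ↥(OAUniv 𝒜)),
      ∀ t : Tm F, t.Orderly → 𝒜 t = ↑(t.realize I a) := by
  classical
  refine ⟨myI 𝒜, mya 𝒜, ?_⟩
  intro t ht
  induction t with
  | var i => rfl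
  | @func n f ts ih =>
    have hot : OrdTuple ts := myOrdTuple_of_orderly_func f ts ht
    have hts : ∀ i, (ts i).Orderly := hot.1
    have hex : ∃ t : Fin n → Tm F, OrdTuple t ∧
        ∀ i, 𝒜 (t i) = (((ts i).realize (myI 𝒜) (mya 𝒜) : ↥(OAUniv 𝒜)) : β) :=
      ⟨ts, hot, fun i => ih i (hts i)⟩
    have : (Tm.func f ts).realize (myI 𝒜) (mya 𝒜)
        = myI 𝒜 n f (fun i => (ts i).realize (myI 𝒜) (mya 𝒜)) := rfl
    rw [this, myI, dif_pos hex]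
    exact h𝒜 n f ts hex.choose hot hex.choose_spec.1
      (fun k => (ih k (hts k)).trans (hex.choose_spec.2 k).symm)
end
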